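/- arXiv:1710.03148 — 9 statements merged into one kernel-verified Lean document; each statement's English description precedes it below -/
import Mathlib

section
/- Let A, B, C be valued σ-structures, let ω be an inverse fractional homomorphism from A to B and ω' an inverse fractional homomorphism from B to C. Define (ω'∘ω) : C^A → ℚ≥0 by (ω'∘ω)(h) = Σ_{h₁ : A→B, h₂ : B→C, h₂∘h₁ = h} ω(h₁)·ω'(h₂). Then ω'∘ω is an inverse fractional homomorphism from A to C. -/
open scoped Classical
noncomputable section

/-- The value codomain `ℚ≥0 ∪ {∞}`. -/
abbrev Val : Type := WithTop NNRat

/-- A valued structure over a signature given by a type `S` of function symbols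
with arities `ar`. -/
structure VStruct (S : Type) (ar : S → ℕ) where
  U : Type
  [fintypeU : Fintype U]
  [decU : DecidableEq U]
  [nonemptyU : Nonempty U]
  val : (f : S) → (Fin (ar f) → U) → Val

attribute [instance] VStruct.fintypeU VStruct.decU VStruct.nonemptyU

variable {S : Type} [Fintype S] {ar : S → ℕ}

/-- Cost of a mapping `h` between the universes of two valued structures. -/
def VStruct.cost (A B : VStruct S ar) (h : A.U → B.U) : Val :=
  ∑ f : S, ∑ x : Fin (ar f) → A.U, A.val f x * B.val f (h ∘ x)

/-- `opt(A,B)`: the minimum cost over all mappings. -/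
def VStruct.opt (A B : VStruct S ar) : Val :=
  Finset.univ.inf' Finset.univ_nonempty (A.cost B)

/-- `f^A(g⁻¹(x))`: sum of `f^A` over the `g`-preimage of the tuple `x`. -/
def VStruct.preSum (A B : VStruct S ar) (g : A.U → B.U) (f : S)
    (x : Fin (ar f) → B.U) : Val :=
  ∑ y ∈ Finset.univ.filter (fun y : Fin (ar f) → A.U => g ∘ y = x), A.val f y

/-- Inverse fractional homomorphism from `A` to `B`. -/
def IsIFH (A B : VStruct S ar) (ω : (A.U → B.U) → NNRat) : Prop :=
  (∑ g : A.U → B.U, ω g) = 1 ∧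
  ∀ (f : S) (x : Fin (ar f) → B.U),
    (∑ g : A.U → B.U, (ω g : Val) * A.preSum B g f x) ≤ B.val f x

/-- `A ≼ B`: `A` improves `B`. -/
def Improves (A B : VStruct S ar) : Prop :=
  ∀ C : VStruct S ar, A.opt C ≤ B.opt C

/-- Valued equivalence. -/
def VEquiv (A B : VStruct S ar) : Prop :=
  ∀ C : VStruct S ar, A.opt C = B.opt C

/-- A valued structure is a core if every inverse fractional homomorphism from
it to itself has only surjective mappings in its support. -/
def IsCore (A : VStruct S ar) : Prop :=
  ∀ ω : (A.U → A.U) → NNRat, IsIFH A A ω →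
    ∀ g : A.U → A.U, 0 < ω g → Function.Surjective g

/-- Key decomposition: the preimage sum under a composite map is the sum of
preimage sums over the fibers of the outer map. -/
lemma preSum_comp (A B C : VStruct S ar) (g₁ : A.U → B.U) (g₂ : B.U → C.U)
    (f : S) (x : Fin (ar f) → C.U) :
    A.preSum C (g₂ ∘ g₁) f x =
      ∑ z ∈ Finset.univ.filter (fun z : Fin (ar f) → B.U => g₂ ∘ z = x),
        A.preSum B g₁ f z := by
  unfold VStruct.preSum
  rw [Finset.sum_fiberwise_eq_sum_filter]
  apply Finset.sum_congr
  · ext y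
    simp [Function.comp_assoc]
  · intros; rfl

/-- The composition of inverse fractional homomorphisms is an inverse
fractional homomorphism. -/
theorem stmt1 (A B C : VStruct S ar)
    (ω : (A.U → B.U) → NNRat) (ω' : (B.U → C.U) → NNRat)
    (hω : IsIFH A B ω) (hω' : IsIFH B C ω') :
    IsIFH A C (fun h : A.U → C.U =>
      ∑ p ∈ Finset.univ.filter
        (fun p : (A.U → B.U) × (B.U → C.U) => p.2 ∘ p.1 = h),
        ω p.1 * ω' p.2) := by
  obtain ⟨hω1, hω2⟩ := hω
  obtain ⟨hω'1, hω'2⟩ := hω'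
  constructor
  · rw [Finset.sum_fiberwise Finset.univ (fun p : (A.U → B.U) × (B.U → C.U) => p.2 ∘ p.1)
      (fun p => ω p.1 * ω' p.2)]
    rw [Fintype.sum_prod_type, ← Finset.sum_mul_sum, hω1, hω'1, mul_one]
  · intro f x
    have step1 : (∑ h : A.U → C.U,
        ((∑ p ∈ Finset.univ.filter
          (fun p : (A.U → B.U) × (B.U → C.U) => p.2 ∘ p.1 = h),
          ω p.1 * ω' p.2 : NNRat) : Val) * A.preSum C h f x) =
        ∑ p : (A.U → B.U) × (B.U → C.U),
          (ω p.1 : Val) * (ω' p.2 : Val) * A.preSum C (p.2 ∘ p.1) f x := by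
      rw [← Finset.sum_fiberwise Finset.univ (fun p : (A.U → B.U) × (B.U → C.U) => p.2 ∘ p.1)
        (fun p => (ω p.1 : Val) * (ω' p.2 : Val) * A.preSum C (p.2 ∘ p.1) f x)]
      apply Finset.sum_congr rfl
      intro h _
      push_cast
      rw [Finset.sum_mul]
      apply Finset.sum_congr rfl
      intro p hp
      rw [(Finset.mem_filter.1 hp).2]
    rw [step1]
    calc ∑ p : (A.U → B.U) × (B.U → C.U),
          (ω p.1 : Val) * (ω' p.2 : Val) * A.preSum C (p.2 ∘ p.1) f x
        = ∑ g₂ : B.U → C.U, (ω' g₂ : Val) *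
            ∑ z ∈ Finset.univ.filter (fun z : Fin (ar f) → B.U => g₂ ∘ z = x),
              ∑ g₁ : A.U → B.U, (ω g₁ : Val) * A.preSum B g₁ f z := by
          rw [Fintype.sum_prod_type_right]
          apply Finset.sum_congr rfl
          intro g₂ _
          simp only [preSum_comp A B C _ g₂ f x, Finset.mul_sum]
          rw [Finset.sum_comm]
          apply Finset.sum_congr rfl
          intro z _
          apply Finset.sum_congr rfl
          intro g₁ _
          ring
      _ ≤ ∑ g₂ : B.U → C.U, (ω' g₂ : Val) *
            ∑ z ∈ Finset.univ.filter (fun z : Fin (ar f) → B.U => g₂ ∘ z = x),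
              B.val f z := by
          apply Finset.sum_le_sum
          intro g₂ _
          exact mul_le_mul_right (Finset.sum_le_sum fun z _ => hω2 f z) _
      _ ≤ C.val f x := hω'2 f x
end
end

section
/- Let A be a valued σ-structure and g : A → A a mapping. Suppose there exists an inverse fractional homomorphism ω from A to A with g ∈ supp(ω). Then for every valued σ-structure C and every mapping s : A → C whose cost equals opt(A, C), the cost of s ∘ g also equals opt(A, C). -/
open scoped Classical
noncomputable section

variable {S : Type} [Fintype S] {ar : S → ℕ}

section Aux
variable {S : Type} [Fintype S] {ar : S → ℕ}

lemma cost_comp (A C : VStruct S ar) (g : A.U → A.U) (s : A.U → C.U) :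
    A.cost C (s ∘ g) = ∑ f : S, ∑ y : Fin (ar f) → A.U,
      A.preSum A g f y * C.val f (s ∘ y) := by
  unfold VStruct.cost VStruct.preSum
  refine Finset.sum_congr rfl fun f _ => ?_
  rw [← Finset.sum_fiberwise Finset.univ (fun x : Fin (ar f) → A.U => g ∘ x)
      (fun x => A.val f x * C.val f ((s ∘ g) ∘ x))]
  refine Finset.sum_congr rfl fun y _ => ?_
  rw [Finset.sum_mul]
  refine Finset.sum_congr rfl fun x hx => ?_
  have hgx : g ∘ x = y := by simpa using (Finset.mem_filter.1 hx).2
  rw [← hgx]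
  rfl

lemma val_mul_lt_mul {c : NNRat} (hc : 0 < c) {a b : Val} (ha : a ≠ ⊤) (hab : a < b) :
    (c : Val) * a < (c : Val) * b := by
  rcases eq_or_ne b ⊤ with hb | hb
  · rw [hb, WithTop.mul_top (by exact_mod_cast hc.ne')]
    exact WithTop.mul_lt_top (WithTop.coe_lt_top _) (lt_top_iff_ne_top.2 ha)
  · lift a to NNRat using ha
    lift b to NNRat using hb
    rw [← WithTop.coe_mul, ← WithTop.coe_mul, WithTop.coe_lt_coe]
    exact mul_lt_mul_of_pos_left (WithTop.coe_lt_coe.1 hab) hc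

end Aux

/-- Composing an optimal mapping with a support mapping of an inverse
fractional self-homomorphism preserves optimality. -/
theorem stmt2 (A : VStruct S ar) (g : A.U → A.U)
    (ω : (A.U → A.U) → NNRat) (hω : IsIFH A A ω) (hg : 0 < ω g)
    (C : VStruct S ar) (s : A.U → C.U) (hs : A.cost C s = A.opt C) :
    A.cost C (s ∘ g) = A.opt C := by
  classical
  have hopt_le : ∀ g' : A.U → A.U, A.opt C ≤ A.cost C (s ∘ g') :=
    fun g' => Finset.inf'_le _ (Finset.mem_univ _)
  have hsumω : (∑ g' : A.U → A.U, (ω g' : Val)) = 1 := by exact_mod_cast hω.1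
  have key : ∑ g' : A.U → A.U, (ω g' : Val) * A.cost C (s ∘ g') ≤ A.cost C s := by
    have h1 : ∑ g' : A.U → A.U, (ω g' : Val) * A.cost C (s ∘ g')
        = ∑ f : S, ∑ y : Fin (ar f) → A.U,
            (∑ g' : A.U → A.U, (ω g' : Val) * A.preSum A g' f y) * C.val f (s ∘ y) := by
      simp_rw [cost_comp, Finset.mul_sum, Finset.sum_mul, mul_assoc]
      rw [Finset.sum_comm]
      exact Finset.sum_congr rfl fun f _ => Finset.sum_comm
    rw [h1]
    unfold VStruct.cost
    refine Finset.sum_le_sum fun f _ => Finset.sum_le_sum fun y _ => ?_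
    exact mul_le_mul_left (hω.2 f y) _
  have hO_eq : A.opt C = (∑ g' : A.U → A.U, (ω g' : Val)) * A.opt C := by
    rw [hsumω, one_mul]
  have hge : A.opt C ≤ ∑ g' : A.U → A.U, (ω g' : Val) * A.cost C (s ∘ g') := by
    calc A.opt C = (∑ g' : A.U → A.U, (ω g' : Val)) * A.opt C := hO_eq
      _ = ∑ g' : A.U → A.U, (ω g' : Val) * A.opt C := Finset.sum_mul _ _ _
      _ ≤ _ := Finset.sum_le_sum fun g' _ => mul_le_mul_right (hopt_le g') _
  have heq : ∑ g' : A.U → A.U, (ω g' : Val) * A.cost C (s ∘ g') = A.opt C :=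
    le_antisymm (key.trans_eq hs) hge
  refine le_antisymm ?_ (hopt_le g)
  by_contra hlt
  push_neg at hlt
  have hOtop : A.opt C ≠ ⊤ := fun h => absurd (h ▸ hlt) (by simp)
  have hmul : (ω g : Val) * A.opt C < (ω g : Val) * A.cost C (s ∘ g) :=
    val_mul_lt_mul hg hOtop hlt
  have hT : (∑ g' ∈ Finset.univ.erase g, (ω g' : Val) * A.opt C) ≠ ⊤ := by
    rw [Ne, WithTop.sum_eq_top]
    rintro ⟨g', -, h⟩
    exact (WithTop.mul_lt_top (WithTop.coe_lt_top _) (lt_top_iff_ne_top.2 hOtop)).ne h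
  have hcontra : A.opt C < A.opt C := by
    calc A.opt C = (∑ g' : A.U → A.U, (ω g' : Val)) * A.opt C := hO_eq
      _ = ∑ g' : A.U → A.U, (ω g' : Val) * A.opt C := Finset.sum_mul _ _ _
      _ = (ω g : Val) * A.opt C
            + ∑ g' ∈ Finset.univ.erase g, (ω g' : Val) * A.opt C :=
        (Finset.add_sum_erase _ _ (Finset.mem_univ g)).symm
      _ < (ω g : Val) * A.cost C (s ∘ g)
            + ∑ g' ∈ Finset.univ.erase g, (ω g' : Val) * A.opt C :=
        WithTop.add_lt_add_right hT hmul
      _ ≤ (ω g : Val) * A.cost C (s ∘ g)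
            + ∑ g' ∈ Finset.univ.erase g, (ω g' : Val) * A.cost C (s ∘ g') :=
        add_le_add_right (Finset.sum_le_sum fun g' _ => mul_le_mul_right (hopt_le g') _) _
      _ = ∑ g' : A.U → A.U, (ω g' : Val) * A.cost C (s ∘ g') :=
        Finset.add_sum_erase _ (fun g' => (ω g' : Val) * A.cost C (s ∘ g'))
          (Finset.mem_univ g)
      _ = A.opt C := heq
  exact lt_irrefl _ hcontra
end
end

section
/- Let A be a valued σ-structure and g : A → A a mapping in the support of some inverse fractional homomorphism from A to A. Then the image structure g(A) is equivalent to A, i.e., opt(g(A), C) = opt(A, C) for every valued σ-structure C. -/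
open scoped Classical
noncomputable section

variable {S : Type} [Fintype S] {ar : S → ℕ}

/-- The image valued structure `g(A)` of a self-map `g`. -/
def imageStruct (A : VStruct S ar) (g : A.U → A.U) : VStruct S ar where
  U := Set.range g
  fintypeU := (Set.toFinite _).fintype
  decU := inferInstance
  nonemptyU := ⟨⟨_, Set.mem_range_self (Classical.arbitrary A.U)⟩⟩
  val := fun f x => ∑ y ∈ Finset.univ.filter
      (fun y : Fin (ar f) → A.U => ∀ i, g (y i) = (x i : A.U)), A.val f y

-- corestriction
def cg (A : VStruct S ar) (g : A.U → A.U) : A.U → (imageStruct A g).U :=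
  fun a => ⟨g a, ⟨a, rfl⟩⟩

lemma preSum_cost (A C : VStruct S ar) (g : A.U → A.U) (h : A.U → C.U) :
    ∑ f : S, ∑ x : Fin (ar f) → A.U, A.preSum A g f x * C.val f (h ∘ x)
      = A.cost C (h ∘ g) := by
  unfold VStruct.cost VStruct.preSum
  refine Finset.sum_congr rfl fun f _ => ?_
  rw [← Finset.sum_fiberwise Finset.univ (fun y : Fin (ar f) → A.U => g ∘ y)
      (fun y => A.val f y * C.val f ((h ∘ g) ∘ y))]
  refine Finset.sum_congr rfl fun x _ => ?_
  rw [Finset.sum_mul]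
  refine Finset.sum_congr rfl fun y hy => ?_
  have hy2 : g ∘ y = x := (Finset.mem_filter.mp hy).2
  rw [← hy2]
  rfl

lemma cost_image (A C : VStruct S ar) (g : A.U → A.U)
    (h' : (imageStruct A g).U → C.U) :
    (imageStruct A g).cost C h' = A.cost C (h' ∘ cg A g) := by
  unfold VStruct.cost imageStruct
  dsimp only
  refine Finset.sum_congr rfl fun f _ => ?_
  refine Eq.trans ?_ (Finset.sum_fiberwise Finset.univ (fun y : Fin (ar f) → A.U => cg A g ∘ y)
      (fun y => A.val f y * C.val f ((h' ∘ cg A g) ∘ y)))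
  refine Finset.sum_congr rfl fun x _ => ?_
  rw [Finset.sum_mul]
  have hfilter : (Finset.univ.filter
        (fun y : Fin (ar f) → A.U => ∀ i, g (y i) = ((x i : (imageStruct A g).U) : A.U)))
      = Finset.univ.filter (fun y : Fin (ar f) → A.U => cg A g ∘ y = x) := by
    refine Finset.filter_congr fun y _ => ?_
    constructor
    · intro hy; funext i; exact Subtype.ext (hy i)
    · intro hy i; exact congrArg Subtype.val (congrFun hy i)
  rw [hfilter]
  refine Finset.sum_congr (by ext y; simp) fun y hy => ?_
  have hy2 : cg A g ∘ y = x := by simp only [Finset.mem_filter] at hy; exact hy.2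
  rw [← hy2]
  rfl

lemma ifh_cost (A C : VStruct S ar) (ω : (A.U → A.U) → NNRat)
    (hω : IsIFH A A ω) (h : A.U → C.U) :
    ∑ g' : A.U → A.U, (ω g' : Val) * A.cost C (h ∘ g') ≤ A.cost C h := by
  have key : ∀ g' : A.U → A.U, (ω g' : Val) * A.cost C (h ∘ g')
      = ∑ f : S, ∑ x : Fin (ar f) → A.U,
          ((ω g' : Val) * A.preSum A g' f x) * C.val f (h ∘ x) := by
    intro g'
    rw [← preSum_cost A C g' h, Finset.mul_sum]
    refine Finset.sum_congr rfl fun f _ => ?_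
    rw [Finset.mul_sum]
    refine Finset.sum_congr rfl fun x _ => ?_
    ring
  calc ∑ g' : A.U → A.U, (ω g' : Val) * A.cost C (h ∘ g')
      = ∑ f : S, ∑ x : Fin (ar f) → A.U,
          (∑ g' : A.U → A.U, (ω g' : Val) * A.preSum A g' f x) * C.val f (h ∘ x) := by
        simp_rw [key, Finset.sum_mul]
        rw [Finset.sum_comm]
        exact Finset.sum_congr rfl fun f _ => Finset.sum_comm
    _ ≤ A.cost C h := by
        unfold VStruct.cost
        refine Finset.sum_le_sum fun f _ => Finset.sum_le_sum fun x _ => ?_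
        exact mul_le_mul_left (hω.2 f x) _


/-- If `g` is in the support of an inverse fractional homomorphism from `A`
to itself, then `g(A)` is equivalent to `A`. -/
theorem stmt3 (A : VStruct S ar) (g : A.U → A.U)
    (ω : (A.U → A.U) → NNRat) (hω : IsIFH A A ω) (hg : 0 < ω g) :
    VEquiv (imageStruct A g) A := by
  intro C
  refine le_antisymm ?_ ?_
  · -- opt(gA, C) ≤ opt(A, C)
    obtain ⟨h, -, hh⟩ := Finset.exists_mem_eq_inf' (Finset.univ_nonempty (α := A.U → C.U))
      (A.cost C)
    have hopt : A.opt C = A.cost C h := hh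
    by_cases htop : A.opt C = ⊤
    · rw [htop]; exact le_top
    -- c_{g'} := A.cost C (h ∘ g') ≥ opt for all g'
    have hge : ∀ g' : A.U → A.U, A.opt C ≤ A.cost C (h ∘ g') := by
      intro g'; exact Finset.inf'_le _ (Finset.mem_univ _)
    have hsum := ifh_cost A C ω hω h
    -- show A.cost C (h ∘ g) ≤ A.opt C
    have hcg : A.cost C (h ∘ g) ≤ A.opt C := by
      have hωg : (ω g : Val) ≠ 0 := by
        exact_mod_cast hg.ne'
      have hsplit : ∑ g' : A.U → A.U, (ω g' : Val) * A.cost C (h ∘ g')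
          = (ω g : Val) * A.cost C (h ∘ g)
            + ∑ g' ∈ Finset.univ.erase g, (ω g' : Val) * A.cost C (h ∘ g') :=
        (Finset.add_sum_erase _ _ (Finset.mem_univ g)).symm
      have hone : ∑ g' : A.U → A.U, (ω g' : Val) * A.opt C = A.opt C := by
        rw [← Finset.sum_mul, ← WithTop.coe_sum, hω.1]
        simp
      have hone' : (ω g : Val) * A.opt C
          + ∑ g' ∈ Finset.univ.erase g, (ω g' : Val) * A.opt C = A.opt C := by
        rw [Finset.add_sum_erase Finset.univ (fun g' => (ω g' : Val) * A.opt C)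
          (Finset.mem_univ g)]
        exact hone
      have hrest : ∑ g' ∈ Finset.univ.erase g, (ω g' : Val) * A.opt C
          ≤ ∑ g' ∈ Finset.univ.erase g, (ω g' : Val) * A.cost C (h ∘ g') :=
        Finset.sum_le_sum fun g' _ => mul_le_mul_right (hge g') _
      -- the "rest" term is finite
      have hrest_le : ∑ g' ∈ Finset.univ.erase g, (ω g' : Val) * A.opt C ≤ A.opt C :=
        le_add_self.trans_eq hone' 
      have hrest_fin : ∑ g' ∈ Finset.univ.erase g, (ω g' : Val) * A.opt C ≠ ⊤ :=
        fun htt => htop (top_le_iff.mp (htt ▸ hrest_le))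
      have hkey : (ω g : Val) * A.cost C (h ∘ g)
          + ∑ g' ∈ Finset.univ.erase g, (ω g' : Val) * A.opt C ≤ A.opt C := by
        calc (ω g : Val) * A.cost C (h ∘ g)
            + ∑ g' ∈ Finset.univ.erase g, (ω g' : Val) * A.opt C
            ≤ (ω g : Val) * A.cost C (h ∘ g)
              + ∑ g' ∈ Finset.univ.erase g, (ω g' : Val) * A.cost C (h ∘ g') :=
              add_le_add_right hrest _
          _ = ∑ g' : A.U → A.U, (ω g' : Val) * A.cost C (h ∘ g') := hsplit.symm
          _ ≤ A.cost C h := hsum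
          _ = A.opt C := hopt.symm
      have hmul : (ω g : Val) * A.cost C (h ∘ g) ≤ (ω g : Val) * A.opt C :=
        (WithTop.add_le_add_iff_right hrest_fin).mp (hkey.trans_eq hone'.symm)
      obtain ⟨o', hoo⟩ := WithTop.ne_top_iff_exists.mp htop
      have hmo : (ω g : Val) * A.opt C ≠ ⊤ := by
        rw [← hoo, ← WithTop.coe_mul]; exact WithTop.coe_ne_top
      have hcfin : A.cost C (h ∘ g) ≠ ⊤ := by
        intro htt
        rw [htt, WithTop.mul_top hωg] at hmul
        exact hmo (top_le_iff.mp hmul)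
      obtain ⟨c', hcc⟩ := WithTop.ne_top_iff_exists.mp hcfin
      rw [← hoo, ← hcc] at hmul ⊢
      rw [← WithTop.coe_mul, ← WithTop.coe_mul, WithTop.coe_le_coe] at hmul
      exact_mod_cast le_of_mul_le_mul_left hmul hg
    calc (imageStruct A g).opt C
        ≤ (imageStruct A g).cost C (h ∘ Subtype.val) :=
          Finset.inf'_le _ (Finset.mem_univ _)
      _ = A.cost C ((h ∘ Subtype.val) ∘ cg A g) := cost_image A C g _
      _ = A.cost C (h ∘ g) := rfl
      _ ≤ A.opt C := hcg
  · -- opt(A,C) ≤ opt(gA,C)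
    obtain ⟨h', -, hh'⟩ := Finset.exists_mem_eq_inf'
      (Finset.univ_nonempty (α := (imageStruct A g).U → C.U)) ((imageStruct A g).cost C)
    rw [show (imageStruct A g).opt C = (imageStruct A g).cost C h' from hh',
      cost_image A C g h']
    exact Finset.inf'_le _ (Finset.mem_univ _)
end
end

section
/- Every valued σ-structure A has a core of A, that is, a valued σ-structure B such that B is a core and B ≡ A; moreover, B can be chosen with universe of size at most |A|. -/
open scoped Classical
noncomputable section

variable {S : Type} [Fintype S] {ar : S → ℕ}

/-! ### Auxiliary constructions -/

set_option linter.unusedSectionVars false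

lemma opt_le_cost (A B : VStruct S ar) (h : A.U → B.U) : A.opt B ≤ A.cost B h :=
  Finset.inf'_le _ (Finset.mem_univ _)

lemma exists_opt (A B : VStruct S ar) : ∃ h : A.U → B.U, A.opt B = A.cost B h := by
  obtain ⟨h, -, hh⟩ := Finset.exists_mem_eq_inf' (Finset.univ_nonempty) (A.cost B)
  exact ⟨h, hh⟩

lemma le_opt (A B : VStruct S ar) (v : Val) (hv : ∀ h : A.U → B.U, v ≤ A.cost B h) :
    v ≤ A.opt B :=
  Finset.le_inf' _ _ fun h _ => hv h

/-- Pushforward of `A` along a self-map `g`. -/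
def pushStruct (A : VStruct S ar) (g : A.U → A.U) : VStruct S ar where
  U := A.U
  val f x := A.preSum A g f x

lemma push_cost (A C : VStruct S ar) (g : A.U → A.U) (h : A.U → C.U) :
    (pushStruct A g).cost C h = A.cost C (h ∘ g) := by
  unfold VStruct.cost pushStruct VStruct.preSum
  refine Finset.sum_congr rfl fun f _ => ?_
  rw [← Finset.sum_fiberwise Finset.univ (fun y : Fin (ar f) → A.U => g ∘ y)
      (fun y => A.val f y * C.val f ((h ∘ g) ∘ y))]
  refine Finset.sum_congr rfl fun x _ => ?_
  rw [Finset.sum_mul]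
  refine Finset.sum_congr rfl fun y hy => ?_
  have hgy : g ∘ y = x := (Finset.mem_filter.mp hy).2
  rw [← hgy]
  rfl

lemma push_val_eq_zero (A : VStruct S ar) (g : A.U → A.U) (f : S)
    (x : Fin (ar f) → A.U) (i : Fin (ar f)) (hi : x i ∉ Set.range g) :
    (pushStruct A g).val f x = 0 := by
  refine Finset.sum_eq_zero fun y hy => ?_
  exact absurd ⟨y i, congrFun (Finset.mem_filter.mp hy).2 i⟩ hi

/-- Restriction of the pushforward to the range of `g`. -/
def restrictStruct (A : VStruct S ar) (g : A.U → A.U) : VStruct S ar where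
  U := Set.range g
  nonemptyU := ⟨⟨g (Classical.arbitrary A.U), ⟨_, rfl⟩⟩⟩
  val f x := (pushStruct A g).val f (fun i => (x i : A.U))

/-- Inclusion of the restricted universe. -/
def restrictIncl (A : VStruct S ar) (g : A.U → A.U) : (restrictStruct A g).U → A.U :=
  fun u => (u : Set.range g).val

lemma restrictIncl_mem (A : VStruct S ar) (g : A.U → A.U) (u : (restrictStruct A g).U) :
    restrictIncl A g u ∈ Set.range g :=
  (u : Set.range g).property

lemma restrictIncl_inj (A : VStruct S ar) (g : A.U → A.U) :
    Function.Injective (restrictIncl A g) := fun u v huv =>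
  show (u : Set.range g) = (v : Set.range g) from Subtype.ext huv

/-- A retraction onto the range of `g`. -/
def retr (A : VStruct S ar) (g : A.U → A.U) : A.U → (restrictStruct A g).U := fun a =>
  if h : a ∈ Set.range g then ⟨a, h⟩ else ⟨g (Classical.arbitrary A.U), ⟨_, rfl⟩⟩

lemma retr_incl (A : VStruct S ar) (g : A.U → A.U) (u : (restrictStruct A g).U) :
    retr A g (restrictIncl A g u) = u := by
  show dite _ _ _ = _
  exact (dif_pos (restrictIncl_mem A g u)).trans (Subtype.ext rfl)

lemma restrict_cost (A C : VStruct S ar) (g : A.U → A.U) (h : A.U → C.U) :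
    (restrictStruct A g).cost C (fun u => h (restrictIncl A g u))
      = (pushStruct A g).cost C h := by
  show (∑ f : S, ∑ x : Fin (ar f) → Set.range g,
      (pushStruct A g).val f (fun i => ((x i : A.U)))
        * C.val f ((fun u : Set.range g => h u.val) ∘ x))
    = ∑ f : S, ∑ x : Fin (ar f) → A.U, (pushStruct A g).val f x * C.val f (h ∘ x)
  refine Finset.sum_congr rfl fun f _ => ?_
  have hinj : ∀ x ∈ (Finset.univ : Finset (Fin (ar f) → Set.range g)), ∀ y ∈ Finset.univ,
      (fun i => ((x i : A.U))) = (fun i => ((y i : A.U))) → x = y := by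
    intro x _ y _ hxy
    exact funext fun i => Subtype.ext (congrFun hxy i)
  have himg := Finset.sum_image (f := fun x : Fin (ar f) → A.U =>
      (pushStruct A g).val f x * C.val f (h ∘ x)) hinj
  have hzero : ∀ x ∈ (Finset.univ : Finset (Fin (ar f) → A.U)),
      x ∉ (Finset.univ : Finset (Fin (ar f) → Set.range g)).image (fun x i => ((x i : A.U))) →
      (pushStruct A g).val f x * C.val f (h ∘ x) = 0 := by
    intro x _ hx
    have hex : ∃ i, x i ∉ Set.range g := by
      by_contra hcon
      push_neg at hcon
      exact hx (Finset.mem_image.mpr ⟨fun i => ⟨x i, hcon i⟩, Finset.mem_univ _, rfl⟩)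
    obtain ⟨i, hi⟩ := hex
    rw [push_val_eq_zero A g f x i hi, zero_mul]
  calc ∑ x : Fin (ar f) → Set.range g,
        (pushStruct A g).val f (fun i => ((x i : A.U)))
          * C.val f ((fun u : Set.range g => h u.val) ∘ x)
      = ∑ x : Fin (ar f) → Set.range g,
        (pushStruct A g).val f (fun i => (x i : A.U)) *
          C.val f (h ∘ (fun i => (x i : A.U))) :=
        Finset.sum_congr rfl fun x _ => rfl
    _ = ∑ x ∈ (Finset.univ : Finset (Fin (ar f) → Set.range g)).image
          (fun x i => ((x i : A.U))),
        (pushStruct A g).val f x * C.val f (h ∘ x) := himg.symm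
    _ = ∑ x : Fin (ar f) → A.U, (pushStruct A g).val f x * C.val f (h ∘ x) :=
        Finset.sum_subset (Finset.subset_univ _) hzero

lemma opt_restrict (A C : VStruct S ar) (g : A.U → A.U) :
    (restrictStruct A g).opt C = (pushStruct A g).opt C := by
  apply le_antisymm
  · obtain ⟨h, hh⟩ := exists_opt (pushStruct A g) C
    rw [hh, ← restrict_cost A C g h]
    exact opt_le_cost _ _ _
  · obtain ⟨h', hh⟩ := exists_opt (restrictStruct A g) C
    rw [hh]
    have heq := restrict_cost A C g (fun a => h' (retr A g a))
    have he : (fun u : (restrictStruct A g).U => h' (retr A g (restrictIncl A g u))) = h' :=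
      funext fun u => by rw [retr_incl]
    rw [he] at heq
    rw [heq]
    exact opt_le_cost _ _ _

lemma opt_le_opt_push (A C : VStruct S ar) (g : A.U → A.U) :
    A.opt C ≤ (pushStruct A g).opt C := by
  refine le_opt _ _ _ fun h => ?_
  rw [push_cost A C g h]
  exact opt_le_cost _ _ _

lemma opt_push_le (A C : VStruct S ar) {ω : (A.U → A.U) → NNRat}
    (hω : IsIFH A A ω) {g : A.U → A.U} (hg : 0 < ω g) :
    (pushStruct A g).opt C ≤ A.opt C := by
  obtain ⟨h, hh⟩ := exists_opt A C
  have hsum : (∑ g' : A.U → A.U, (ω g' : Val) * (pushStruct A g').opt C) ≤ A.opt C := by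
    calc ∑ g' : A.U → A.U, (ω g' : Val) * (pushStruct A g').opt C
        ≤ ∑ g' : A.U → A.U, (ω g' : Val) * (pushStruct A g').cost C h :=
          Finset.sum_le_sum fun g' _ =>
            mul_le_mul_right (opt_le_cost _ _ _) _
      _ = ∑ f : S, ∑ x : Fin (ar f) → A.U,
            (∑ g' : A.U → A.U, (ω g' : Val) * A.preSum A g' f x) * C.val f (h ∘ x) := by
          unfold VStruct.cost pushStruct
          simp only [Finset.mul_sum, Finset.sum_mul, mul_assoc]
          rw [Finset.sum_comm]
          exact Finset.sum_congr rfl fun f _ => Finset.sum_comm (s := Finset.univ) (t := Finset.univ)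
      _ ≤ ∑ f : S, ∑ x : Fin (ar f) → A.U, A.val f x * C.val f (h ∘ x) :=
          Finset.sum_le_sum fun f _ => Finset.sum_le_sum fun x _ =>
            mul_le_mul_left (hω.2 f x) _
      _ = A.cost C h := rfl
      _ = A.opt C := hh.symm
  by_cases htop : A.opt C = ⊤
  · rw [htop]; exact le_top
  obtain ⟨q, hq⟩ := WithTop.ne_top_iff_exists.mp htop
  rw [← hq] at hsum ⊢
  have h1 : ∀ g' : A.U → A.U, (q : Val) ≤ (pushStruct A g').opt C := fun g' => by
    rw [hq]; exact opt_le_opt_push A C g'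
  set T : Val := ∑ g' ∈ Finset.univ.erase g, (ω g' : Val) * (q : Val) with hT
  have hsplit : ∀ F : (A.U → A.U) → Val,
      (∑ g' : A.U → A.U, F g') = F g + ∑ g' ∈ Finset.univ.erase g, F g' := fun F =>
    (Finset.add_sum_erase _ F (Finset.mem_univ g)).symm
  have htotal : (∑ g' : A.U → A.U, (ω g' : Val) * (q : Val)) = (q : Val) := by
    rw [← Finset.sum_mul]
    have hcoe : (∑ g' : A.U → A.U, (ω g' : Val)) = ((∑ g' : A.U → A.U, ω g' : NNRat) : Val) := by
      exact_mod_cast rfl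
    rw [hcoe, hω.1]
    simp
  have hq_eq : (ω g : Val) * (q : Val) + T = (q : Val) := by
    rw [← hsplit (fun g' => (ω g' : Val) * (q : Val)), htotal]
  have hle : (ω g : Val) * (pushStruct A g).opt C + T ≤ (ω g : Val) * (q : Val) + T := by
    have step1 : (ω g : Val) * (pushStruct A g).opt C + T
        ≤ ∑ g' : A.U → A.U, (ω g' : Val) * (pushStruct A g').opt C := by
      rw [hsplit (fun g' => (ω g' : Val) * (pushStruct A g').opt C)]
      refine add_le_add_right ?_ _
      exact Finset.sum_le_sum fun g' _ => mul_le_mul_right (h1 g') _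
    rw [hq_eq]
    exact step1.trans hsum
  have hTne : T ≠ ⊤ := by
    have hTle : T ≤ (q : Val) := by
      calc T ≤ (ω g : Val) * (q : Val) + T := le_add_self
        _ = (q : Val) := hq_eq
    exact fun hTt => absurd (hTt ▸ hTle) (by simp)
  have hmul : (ω g : Val) * (pushStruct A g).opt C ≤ (ω g : Val) * (q : Val) :=
    (WithTop.add_le_add_iff_right hTne).mp hle
  have hPne : (pushStruct A g).opt C ≠ ⊤ := by
    intro hP
    rw [hP] at hmul
    have hmt : (ω g : Val) * ⊤ = ⊤ := by
      refine WithTop.mul_top ?_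
      exact_mod_cast hg.ne'
    rw [hmt] at hmul
    exact absurd hmul (by simp [← WithTop.coe_mul])
  obtain ⟨p, hp⟩ := WithTop.ne_top_iff_exists.mp hPne
  rw [← hp] at hmul ⊢
  rw [← WithTop.coe_mul, ← WithTop.coe_mul, WithTop.coe_le_coe] at hmul
  exact WithTop.coe_le_coe.mpr (le_of_mul_le_mul_left hmul hg)

lemma vequiv_restrict (A : VStruct S ar) {ω : (A.U → A.U) → NNRat}
    (hω : IsIFH A A ω) {g : A.U → A.U} (hg : 0 < ω g) :
    VEquiv (restrictStruct A g) A := fun C => by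
  rw [opt_restrict]
  exact le_antisymm (opt_push_le A C hω hg) (opt_le_opt_push A C g)

/-- Every valued structure has a core, over a universe of size at most `|A|`. -/
theorem stmt6 (A : VStruct S ar) :
    ∃ B : VStruct S ar, IsCore B ∧ VEquiv B A ∧
      Fintype.card B.U ≤ Fintype.card A.U := by
  suffices H : ∀ n, ∀ A : VStruct S ar, Fintype.card A.U ≤ n →
      ∃ B : VStruct S ar, IsCore B ∧ VEquiv B A ∧
        Fintype.card B.U ≤ Fintype.card A.U from H _ A le_rfl
  intro n
  induction n with
  | zero =>
    intro A hA
    have := Fintype.card_pos (α := A.U)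
    omega
  | succ n ih =>
    intro A hA
    by_cases hc : IsCore A
    · exact ⟨A, hc, fun C => rfl, le_rfl⟩
    · rw [IsCore] at hc
      push_neg at hc
      obtain ⟨ω, hω, g, hg, hns⟩ := hc
      obtain ⟨a, ha⟩ := not_forall.mp hns
      have hcard : Fintype.card (restrictStruct A g).U < Fintype.card A.U := by
        refine Fintype.card_lt_of_injective_of_notMem (restrictIncl A g)
          (restrictIncl_inj A g) (b := a) ?_
        rintro ⟨u, hu⟩
        exact ha (hu ▸ restrictIncl_mem A g u)
      obtain ⟨B, hB1, hB2, hB3⟩ := ih (restrictStruct A g) (by omega)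
      exact ⟨B, hB1, fun C => (hB2 C).trans (vequiv_restrict A hω hg C), by omega⟩
end
end

section
/- Let A, B be valued σ-structures. Then A ≼ B (A improves B) if and only if for every mapping c : Tup(B) → ℚ≥0 there exists a mapping h : A → B such that Σ_{(f,x)∈Tup(B)} c(f,x)·f^B(x) ≥ Σ_{(f,x)∈Tup(A)} c(f,h(x))·f^A(x). -/
open scoped Classical
noncomputable section

variable {S : Type} [Fintype S] {ar : S → ℕ}

section Aux
variable {S : Type} [Fintype S] {ar : S → ℕ}

theorem stmt12_aux (A B : VStruct S ar) :
    Improves A B ↔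
    ∀ c : (f : S) → (Fin (ar f) → B.U) → NNRat,
      ∃ h : A.U → B.U,
        (∑ f : S, ∑ x : Fin (ar f) → A.U, (c f (h ∘ x) : Val) * A.val f x) ≤
        (∑ f : S, ∑ x : Fin (ar f) → B.U, (c f x : Val) * B.val f x) := by
  constructor
  · intro hAB c
    set C : VStruct S ar := { U := B.U, val := fun f x => (c f x : Val) } with hC
    obtain ⟨h, -, hh⟩ := Finset.exists_mem_eq_inf' (Finset.univ_nonempty) (A.cost C)
    refine ⟨h, ?_⟩
    have h1 : (∑ f : S, ∑ x : Fin (ar f) → A.U, (c f (h ∘ x) : Val) * A.val f x)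
        = A.cost C h := by
      simp only [VStruct.cost, hC]
      exact Finset.sum_congr rfl fun f _ => Finset.sum_congr rfl fun x _ => mul_comm _ _
    have h2 : B.opt C ≤ B.cost C id := Finset.inf'_le _ (Finset.mem_univ id)
    have h3 : B.cost C id
        = ∑ f : S, ∑ x : Fin (ar f) → B.U, (c f x : Val) * B.val f x := by
      simp only [VStruct.cost, hC, Function.id_comp]
      exact Finset.sum_congr rfl fun f _ => Finset.sum_congr rfl fun x _ => mul_comm _ _
    calc (∑ f : S, ∑ x : Fin (ar f) → A.U, (c f (h ∘ x) : Val) * A.val f x)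
        = A.cost C h := h1
      _ = A.opt C := hh.symm
      _ ≤ B.opt C := hAB C
      _ ≤ B.cost C id := h2
      _ = _ := h3
  · intro hc C
    obtain ⟨g, -, hg⟩ := Finset.exists_mem_eq_inf' (Finset.univ_nonempty) (B.cost C)
    by_cases htop : B.cost C g = ⊤
    · have hBt : B.opt C = ⊤ := hg.trans htop
      rw [hBt]; exact le_top
    obtain ⟨V', hV⟩ := WithTop.ne_top_iff_exists.mp htop
    -- each term of the cost sum is finite
    have hterm : ∀ (f : S) (x : Fin (ar f) → B.U),
        B.val f x * C.val f (g ∘ x) ≠ ⊤ := by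
      intro f x hfx
      apply htop
      refine top_le_iff.mp ?_
      calc (⊤ : Val) = B.val f x * C.val f (g ∘ x) := hfx.symm
        _ ≤ ∑ x : Fin (ar f) → B.U, B.val f x * C.val f (g ∘ x) :=
            Finset.single_le_sum (f := fun x => B.val f x * C.val f (g ∘ x))
              (fun _ _ => zero_le) (Finset.mem_univ x)
        _ ≤ B.cost C g :=
            Finset.single_le_sum (f := fun f : S =>
              ∑ x : Fin (ar f) → B.U, B.val f x * C.val f (g ∘ x))
              (fun _ _ => zero_le) (Finset.mem_univ f)
    -- the big constant
    set N : NNRat := 1 + ∑ f : S, ∑ x : Fin (ar f) → A.U,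
        (V' + 1) * ((A.val f x).untopD 1)⁻¹ with hN
    have hN1 : (1 : NNRat) ≤ N := le_add_of_nonneg_right (zero_le)
    have hNbig : ∀ (f : S) (x : Fin (ar f) → A.U) (a : NNRat),
        A.val f x = (a : Val) → a ≠ 0 → V' < N * a := by
      intro f x a hax ha
      have h1 : (V' + 1) * (((A.val f x).untopD 1)⁻¹) ≤ N := by
        refine le_add_of_nonneg_of_le (zero_le) ?_
        calc (V' + 1) * ((A.val f x).untopD 1)⁻¹
            ≤ ∑ x : Fin (ar f) → A.U, (V' + 1) * ((A.val f x).untopD 1)⁻¹ :=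
              Finset.single_le_sum (f := fun x => (V' + 1) * ((A.val f x).untopD 1)⁻¹)
                (fun _ _ => zero_le) (Finset.mem_univ x)
          _ ≤ _ :=
              Finset.single_le_sum (f := fun f : S =>
                  ∑ x : Fin (ar f) → A.U, (V' + 1) * ((A.val f x).untopD 1)⁻¹)
                (fun _ _ => zero_le) (Finset.mem_univ f)
      have h2 : ((A.val f x).untopD 1)⁻¹ = a⁻¹ := by rw [hax]; rfl
      rw [h2] at h1
      have h3 : (V' + 1) * a⁻¹ * a ≤ N * a := mul_le_mul_left h1 a
      rw [mul_assoc, inv_mul_cancel₀ ha, mul_one] at h3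
      exact lt_of_lt_of_le (lt_add_one V') h3
    -- the weighting
    set c : (f : S) → (Fin (ar f) → B.U) → NNRat := fun f y =>
      if C.val f (g ∘ y) = ⊤ then N else (C.val f (g ∘ y)).untopD 0 with hcdef
    obtain ⟨h, hh⟩ := hc c
    -- RHS equals cost of g
    have hr : (∑ f : S, ∑ x : Fin (ar f) → B.U, (c f x : Val) * B.val f x)
        = B.cost C g := by
      refine Finset.sum_congr rfl fun f _ => Finset.sum_congr rfl fun x _ => ?_
      by_cases hx : C.val f (g ∘ x) = ⊤
      · have hb : B.val f x = 0 := by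
          by_contra hb0
          exact hterm f x (by rw [hx, WithTop.mul_top hb0])
        simp [hb]
      · obtain ⟨d, hd⟩ := WithTop.ne_top_iff_exists.mp hx
        simp only [hcdef, if_neg hx, ← hd, WithTop.untopD_coe, mul_comm]
    rw [hr, ← hV] at hh
    -- key claim: on the support of A.val, C is finite along g ∘ h
    have hclaim : ∀ (f : S) (x : Fin (ar f) → A.U), A.val f x ≠ 0 →
        C.val f ((g ∘ h) ∘ x) ≠ ⊤ := by
      intro f x ha hcon
      have hcx : c f (h ∘ x) = N := by
        have : C.val f (g ∘ (h ∘ x)) = ⊤ := hcon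
        simp only [hcdef, if_pos this]
      have hle : (c f (h ∘ x) : Val) * A.val f x ≤ (V' : Val) := by
        calc (c f (h ∘ x) : Val) * A.val f x
            ≤ ∑ x : Fin (ar f) → A.U, (c f (h ∘ x) : Val) * A.val f x :=
              Finset.single_le_sum (f := fun x => (c f (h ∘ x) : Val) * A.val f x)
                (fun _ _ => zero_le) (Finset.mem_univ x)
          _ ≤ ∑ f : S, ∑ x : Fin (ar f) → A.U, (c f (h ∘ x) : Val) * A.val f x :=
              Finset.single_le_sum (f := fun f : S =>
                ∑ x : Fin (ar f) → A.U, (c f (h ∘ x) : Val) * A.val f x)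
                (fun _ _ => zero_le) (Finset.mem_univ f)
          _ ≤ (V' : Val) := hh
      rw [hcx] at hle
      rcases eq_or_ne (A.val f x) ⊤ with hA | hA
      · rw [hA, WithTop.mul_top (by exact_mod_cast one_pos.trans_le hN1 |>.ne')] at hle
        exact (WithTop.coe_ne_top) (top_le_iff.mp hle)
      · obtain ⟨a, haa⟩ := WithTop.ne_top_iff_exists.mp hA
        have ha0 : a ≠ 0 := by
          intro h0; apply ha; rw [← haa, h0]; rfl
        have := hNbig f x a haa.symm ha0
        rw [← haa, ← WithTop.coe_mul, WithTop.coe_le_coe] at hle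
        exact absurd hle (not_le.mpr this)
    -- cost of g ∘ h equals LHS
    have hl : A.cost C (g ∘ h)
        = ∑ f : S, ∑ x : Fin (ar f) → A.U, (c f (h ∘ x) : Val) * A.val f x := by
      refine Finset.sum_congr rfl fun f _ => Finset.sum_congr rfl fun x _ => ?_
      by_cases ha : A.val f x = 0
      · simp [ha]
      · have hfin := hclaim f x ha
        obtain ⟨d, hd⟩ := WithTop.ne_top_iff_exists.mp hfin
        have : c f (h ∘ x) = d := by
          have h1 : C.val f (g ∘ (h ∘ x)) = (d : Val) := hd.symm
          simp only [hcdef, h1, if_neg (h1 ▸ WithTop.coe_ne_top), WithTop.untopD_coe]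
        rw [this]
        have h2 : C.val f ((g ∘ h) ∘ x) = (d : Val) := hd.symm
        rw [h2, mul_comm]
    calc A.opt C ≤ A.cost C (g ∘ h) := Finset.inf'_le _ (Finset.mem_univ _)
      _ = ∑ f : S, ∑ x : Fin (ar f) → A.U, (c f (h ∘ x) : Val) * A.val f x := hl
      _ ≤ (V' : Val) := hh
      _ = B.cost C g := hV
      _ = B.opt C := hg.symm

end Aux

/-- Characterisation of improvement in terms of weightings of the tuples of
`B`. -/
theorem stmt12 (A B : VStruct S ar) :
    Improves A B ↔
    ∀ c : (f : S) → (Fin (ar f) → B.U) → NNRat,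
      ∃ h : A.U → B.U,
        (∑ f : S, ∑ x : Fin (ar f) → A.U, (c f (h ∘ x) : Val) * A.val f x) ≤
        (∑ f : S, ∑ x : Fin (ar f) → B.U, (c f x : Val) * B.val f x) := stmt12_aux A B
end
end

section
/- Let A, B be valued σ-structures. Then A ≼ B (i.e., opt(A,C) ≤ opt(B,C) for all valued σ-structures C) if and only if there exists an inverse fractional homomorphism from A to B. -/
open scoped Classical
noncomputable section

variable {S : Type} [Fintype S] {ar : S → ℕ}

set_option linter.unusedSectionVars false

theorem myFarkasBartl {V : Type} [AddCommGroup V] [Module ℚ V] :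
    ∀ (m : ℕ) (A : V →ₗ[ℚ] (Fin m → ℚ)) (b : V →ₗ[ℚ] ℚ),
    (∀ v, (∀ i, A v i ≤ 0) → b v ≤ 0) →
    ∃ y : Fin m → ℚ, (∀ i, 0 ≤ y i) ∧ ∀ v, b v = ∑ i, y i * A v i := by
  intro m
  induction m with
  | zero =>
    intro A b hb
    refine ⟨0, fun i => le_rfl, fun v => ?_⟩
    have h1 : b v ≤ 0 := hb v (fun i => i.elim0)
    have h2 : b (-v) ≤ 0 := hb (-v) (fun i => i.elim0)
    rw [map_neg] at h2
    simp
    linarith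
  | succ m ih =>
    intro A b hb
    set A' : V →ₗ[ℚ] (Fin m → ℚ) :=
      LinearMap.pi (fun i => LinearMap.proj (R := ℚ) i.castSucc ∘ₗ A) with hA'
    set a : V →ₗ[ℚ] ℚ := LinearMap.proj (R := ℚ) (Fin.last m) ∘ₗ A with ha
    have hA'app : ∀ v i, A' v i = A v i.castSucc := fun v i => rfl
    have haapp : ∀ v, a v = A v (Fin.last m) := fun v => rfl
    by_cases hc : ∀ v, (∀ i, A' v i ≤ 0) → b v ≤ 0
    · obtain ⟨y', hy', hby'⟩ := ih A' b hc
      refine ⟨Fin.snoc y' 0, ?_, fun v => ?_⟩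
      · intro i
        refine Fin.lastCases ?_ ?_ i
        · simp
        · intro j; simpa using hy' j
      · rw [hby' v, Fin.sum_univ_castSucc]
        simp [Fin.snoc_castSucc, hA'app]
    · push_neg at hc
      obtain ⟨u, hu, hbu⟩ := hc
      have hau : 0 < a u := by
        by_contra hle
        push_neg at hle
        have : ∀ i, A u i ≤ 0 := by
          intro i
          refine Fin.lastCases ?_ ?_ i
          · exact hle
          · intro j; exact hu j
        exact absurd (hb u this) (not_le.mpr hbu)
      set u0 : V := (a u)⁻¹ • u with hu0
      have hau0 : a u0 = 1 := by
        rw [hu0, map_smul, smul_eq_mul, inv_mul_cancel₀ (ne_of_gt hau)]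
      have hA'u0 : ∀ i, A' u0 i ≤ 0 := by
        intro i
        rw [hu0, map_smul]
        have : (0:ℚ) ≤ (a u)⁻¹ := le_of_lt (inv_pos.mpr hau)
        simpa using mul_nonpos_of_nonneg_of_nonpos this (hu i)
      have hbu0 : 0 < b u0 := by
        rw [hu0, map_smul, smul_eq_mul]
        positivity
      set T : V →ₗ[ℚ] V := LinearMap.id - a.smulRight u0 with hT
      have hTapp : ∀ v, T v = v - a v • u0 := fun v => rfl
      have haT : ∀ v, a (T v) = 0 := by
        intro v
        rw [hTapp, map_sub, map_smul, smul_eq_mul, hau0, mul_one, sub_self]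
      have hyp : ∀ v, (∀ i, (A' ∘ₗ T) v i ≤ 0) → (b ∘ₗ T) v ≤ 0 := by
        intro v hv
        refine hb (T v) ?_
        intro i
        refine Fin.lastCases ?_ ?_ i
        · rw [← haapp, haT]
        · intro j; exact hv j
      obtain ⟨y', hy', hby'⟩ := ih (A' ∘ₗ T) (b ∘ₗ T) hyp
      set c : ℚ := b u0 - ∑ i, y' i * A' u0 i with hcdef
      have hcpos : 0 < c := by
        have : ∑ i, y' i * A' u0 i ≤ 0 :=
          Finset.sum_nonpos (fun i _ => mul_nonpos_of_nonneg_of_nonpos (hy' i) (hA'u0 i))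
        rw [hcdef]; linarith
      refine ⟨Fin.snoc y' c, ?_, fun v => ?_⟩
      · intro i
        refine Fin.lastCases ?_ ?_ i
        · simp [hcpos.le]
        · intro j; simpa using hy' j
      · have key : b v = b (T v) + a v * b u0 := by
          rw [hTapp, map_sub, map_smul, smul_eq_mul]; ring
        have key2 : ∀ i, A' (T v) i = A' v i - a v * A' u0 i := by
          intro i
          rw [hTapp, map_sub, map_smul]
          simp [smul_eq_mul]
        have hbT : b (T v) = ∑ i, y' i * A' (T v) i := hby' v
        have e1 : ∑ i, y' i * (a v * A' u0 i) = a v * ∑ i, y' i * A' u0 i := by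
          rw [Finset.mul_sum]; exact Finset.sum_congr rfl fun i _ => by ring
        rw [key, hbT, Finset.sum_congr rfl fun i (_ : i ∈ Finset.univ) => by rw [key2 i],
          Fin.sum_univ_castSucc]
        simp only [Fin.snoc_castSucc, Fin.snoc_last, ← hA'app, ← haapp, mul_sub,
          Finset.sum_sub_distrib, e1, hcdef]
        ring


theorem myFarkasInfeasible {I J : Type} [Fintype I] [Fintype J] [DecidableEq J]
    (M : I → J → ℚ) (b : I → ℚ)
    (h : ¬ ∃ x : J → ℚ, ∀ i, ∑ j, M i j * x j ≤ b i) :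
    ∃ y : I → ℚ, (∀ i, 0 ≤ y i) ∧ (∀ j, ∑ i, y i * M i j = 0) ∧ ∑ i, y i * b i = -1 := by
  classical
  set m := Fintype.card I with hm
  set e := (Fintype.equivFin I).symm with he
  -- V = (J → ℚ) × ℚ
  let A : ((J → ℚ) × ℚ) →ₗ[ℚ] (Fin m → ℚ) :=
    { toFun := fun v i => ∑ j, M (e i) j * v.1 j - v.2 * b (e i)
      map_add' := by
        intro v w
        funext i
        simp only [Prod.fst_add, Prod.snd_add, Pi.add_apply, mul_add, add_mul,
          Finset.sum_add_distrib]
        ring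
      map_smul' := by
        intro c v
        funext i
        show ∑ j, M (e i) j * (c • v.1) j - (c • v.2) * b (e i)
            = c * (∑ j, M (e i) j * v.1 j - v.2 * b (e i))
        have hsum : ∑ j, M (e i) j * (c • v.1) j = c * ∑ j, M (e i) j * v.1 j := by
          rw [Finset.mul_sum]
          refine Finset.sum_congr rfl fun j _ => ?_
          simp only [Pi.smul_apply, smul_eq_mul]
          ring
        rw [hsum, smul_eq_mul]
        ring }
  let bb : ((J → ℚ) × ℚ) →ₗ[ℚ] ℚ :=
    { toFun := fun v => v.2
      map_add' := fun _ _ => rfl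
      map_smul' := fun _ _ => rfl }
  have hyp : ∀ v, (∀ i, A v i ≤ 0) → bb v ≤ 0 := by
    rintro ⟨x, t⟩ hv
    by_contra hpos
    push_neg at hpos
    refine h ⟨t⁻¹ • x, fun i => ?_⟩
    have hvi := hv (e.symm i)
    simp only [A, LinearMap.coe_mk, AddHom.coe_mk, Equiv.apply_symm_apply, sub_nonpos] at hvi
    have ht : (0:ℚ) < t := hpos
    calc ∑ j, M i j * (t⁻¹ • x) j = t⁻¹ * ∑ j, M i j * x j := by
          rw [Finset.mul_sum]; exact Finset.sum_congr rfl fun j _ => by simp [smul_eq_mul]; ring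
      _ ≤ t⁻¹ * (t * b i) := by
          apply mul_le_mul_of_nonneg_left hvi (le_of_lt (inv_pos.mpr ht))
      _ = b i := by field_simp
  obtain ⟨y0, hy0, hall⟩ := myFarkasBartl m A bb hyp
  refine ⟨fun i => y0 (e.symm i), fun i => hy0 _, ?_, ?_⟩
  · intro j0
    have := hall ((Pi.single j0 1 : J → ℚ), 0)
    simp only [A, bb, LinearMap.coe_mk, AddHom.coe_mk, zero_mul, sub_zero] at this
    have hsingle : ∀ i : Fin m, ∑ j, M (e i) j * (Pi.single j0 1 : J → ℚ) j = M (e i) j0 := by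
      intro i
      rw [Finset.sum_eq_single j0]
      · simp
      · intro j _ hj; simp [Pi.single_apply, hj]
      · intro hj; exact absurd (Finset.mem_univ j0) hj
    rw [Finset.sum_congr rfl fun i _ => by rw [hsingle i]] at this
    rw [← Equiv.sum_comp e (fun i => y0 (e.symm i) * M i j0)]
    simp only [Equiv.symm_apply_apply]
    exact this.symm
  · have := hall (0, 1)
    simp only [A, bb, LinearMap.coe_mk, AddHom.coe_mk, Pi.zero_apply, mul_zero,
      Finset.sum_const_zero, one_mul, zero_sub, mul_neg] at this
    rw [← Equiv.sum_comp e (fun i => y0 (e.symm i) * b i)]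
    simp only [Equiv.symm_apply_apply]
    have h2 : ∑ x : Fin m, -(y0 x * b (e x)) = -∑ x : Fin m, y0 x * b (e x) := by
      rw [Finset.sum_neg_distrib]
    rw [h2] at this
    linarith

theorem mySeparation {ι G : Type} [Fintype ι] [Fintype G] [DecidableEq G]
    (v : G → ι → ℚ) (b : ι → ℚ)
    (h : ¬ ∃ ω : G → ℚ, (∀ g, 0 ≤ ω g) ∧ ∑ g, ω g = 1 ∧ ∀ i, ∑ g, ω g * v g i ≤ b i) :
    ∃ (y : ι → ℚ) (z : ℚ), (∀ i, 0 ≤ y i) ∧ ∑ i, y i * b i < z ∧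
      ∀ g, z ≤ ∑ i, y i * v g i := by
  classical
  set M : (ι ⊕ G ⊕ Bool) → G → ℚ := fun r g =>
    Sum.rec (fun i => v g i)
      (Sum.rec (fun g' => if g = g' then -1 else 0) (fun t => if t then 1 else -1)) r with hM
  set bb : (ι ⊕ G ⊕ Bool) → ℚ :=
    Sum.rec b (Sum.rec (fun _ => 0) (fun t => if t then 1 else -1)) with hbb
  have hinf : ¬ ∃ x : G → ℚ, ∀ r, ∑ g, M r g * x g ≤ bb r := by
    rintro ⟨x, hx⟩
    refine h ⟨x, fun g => ?_, ?_, fun i => ?_⟩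
    · have := hx (Sum.inr (Sum.inl g))
      simp only [hM, hbb] at this
      rw [Finset.sum_eq_single g (fun g' _ hg' => by simp [hg'])
        (fun hg => absurd (Finset.mem_univ g) hg)] at this
      simp at this
      linarith
    · have h1 := hx (Sum.inr (Sum.inr true))
      have h2 := hx (Sum.inr (Sum.inr false))
      simp only [hM, hbb, if_true, Bool.false_eq_true, if_false, one_mul, neg_mul,
        Finset.sum_neg_distrib] at h1 h2
      linarith
    · have := hx (Sum.inl i)
      simp only [hM, hbb] at this
      calc ∑ g, x g * v g i = ∑ g, v g i * x g := Finset.sum_congr rfl fun g _ => mul_comm _ _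
        _ ≤ b i := this
  obtain ⟨y', hy', hcol, hb'⟩ := myFarkasInfeasible M bb hinf
  set p := y' (Sum.inr (Sum.inr true)) with hp
  set q := y' (Sum.inr (Sum.inr false)) with hq
  refine ⟨fun i => y' (Sum.inl i), q - p, fun i => hy' _, ?_, fun g => ?_⟩
  · have hthis := hb'
    rw [Fintype.sum_sum_type, Fintype.sum_sum_type, Fintype.sum_bool] at hthis
    simp only [hbb, mul_zero, Finset.sum_const_zero, add_zero, if_true,
      Bool.false_eq_true, if_false, mul_one, mul_neg] at hthis
    rw [← hp, ← hq] at hthis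
    linarith
  · have hthis := hcol g
    rw [Fintype.sum_sum_type, Fintype.sum_sum_type, Fintype.sum_bool] at hthis
    simp only [hM] at hthis
    rw [Finset.sum_eq_single g (fun g' _ hg' => by simp [Ne.symm hg'])
      (fun hg => absurd (Finset.mem_univ g) hg)] at hthis
    simp only [if_pos rfl, Bool.false_eq_true, if_true, if_false, mul_neg, mul_one] at hthis
    rw [← hp, ← hq] at hthis
    have hw : 0 ≤ y' (Sum.inr (Sum.inl g)) := hy' _
    linarith

/-- regrouping lemma -/
lemma regroup (A B : VStruct S ar) (g : A.U → B.U) (f : S)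
    (w : (Fin (ar f) → B.U) → Val) :
    ∑ y : Fin (ar f) → A.U, A.val f y * w (g ∘ y)
      = ∑ x : Fin (ar f) → B.U, A.preSum B g f x * w x := by
  rw [← Finset.sum_fiberwise Finset.univ (fun y => g ∘ y)
      (fun y => A.val f y * w (g ∘ y))]
  unfold VStruct.preSum
  refine Finset.sum_congr rfl fun x _ => ?_
  rw [Finset.sum_mul]
  refine Finset.sum_congr rfl fun y hy => ?_
  rw [Finset.mem_filter] at hy
  rw [hy.2]


lemma backward (A B : VStruct S ar) (ω : (A.U → B.U) → NNRat) (hifh : IsIFH A B ω) :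
    Improves A B := by
  obtain ⟨hω1, hω2⟩ := hifh
  intro C
  obtain ⟨h0, -, hh0⟩ := Finset.exists_mem_eq_inf' (Finset.univ_nonempty) (B.cost C)
  have step1 : ∀ g : A.U → B.U, A.opt C ≤ A.cost C (h0 ∘ g) :=
    fun g => Finset.inf'_le _ (Finset.mem_univ _)
  have costAg : ∀ g : A.U → B.U, A.cost C (h0 ∘ g)
      = ∑ f : S, ∑ x : Fin (ar f) → B.U, A.preSum B g f x * C.val f (h0 ∘ x) := by
    intro g
    unfold VStruct.cost
    exact Finset.sum_congr rfl fun f _ =>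
      regroup A B g f (fun x => C.val f (h0 ∘ x))
  calc A.opt C = (1 : Val) * A.opt C := (one_mul _).symm
    _ = ((∑ g : A.U → B.U, ω g : NNRat) : Val) * A.opt C := by rw [hω1]; norm_cast
    _ = (∑ g : A.U → B.U, (ω g : Val)) * A.opt C := by push_cast; ring
    _ = ∑ g : A.U → B.U, (ω g : Val) * A.opt C := by rw [Finset.sum_mul]
    _ ≤ ∑ g : A.U → B.U, (ω g : Val) * A.cost C (h0 ∘ g) :=
        Finset.sum_le_sum fun g _ => mul_le_mul_right (step1 g) _
    _ = ∑ g : A.U → B.U, ∑ f : S, ∑ x : Fin (ar f) → B.U,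
          ((ω g : Val) * A.preSum B g f x) * C.val f (h0 ∘ x) := by
        refine Finset.sum_congr rfl fun g _ => ?_
        rw [costAg g, Finset.mul_sum]
        refine Finset.sum_congr rfl fun f _ => ?_
        rw [Finset.mul_sum]
        exact Finset.sum_congr rfl fun x _ => by rw [mul_assoc]
    _ = ∑ f : S, ∑ x : Fin (ar f) → B.U,
          (∑ g : A.U → B.U, (ω g : Val) * A.preSum B g f x) * C.val f (h0 ∘ x) := by
        rw [Finset.sum_comm]
        refine Finset.sum_congr rfl fun f _ => ?_
        rw [Finset.sum_comm]
        refine Finset.sum_congr rfl fun x _ => ?_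
        rw [Finset.sum_mul]
    _ ≤ ∑ f : S, ∑ x : Fin (ar f) → B.U, B.val f x * C.val f (h0 ∘ x) :=
        Finset.sum_le_sum fun f _ => Finset.sum_le_sum fun x _ =>
          mul_le_mul_left (hω2 f x) _
    _ = B.cost C h0 := rfl
    _ = B.opt C := hh0.symm

def PairIdx (B : VStruct S ar) : Type :=
  {p : Σ f : S, (Fin (ar f) → B.U) // B.val p.1 p.2 ≠ ⊤}

noncomputable instance (B : VStruct S ar) : Fintype (PairIdx B) :=
  @Subtype.fintype _ _ (fun _ => Classical.propDecidable _) _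

def GoodMaps (A B : VStruct S ar) : Type :=
  {g : A.U → B.U // ∀ p : PairIdx B, A.preSum B g p.1.1 p.1.2 ≠ ⊤}

noncomputable instance (A B : VStruct S ar) : Fintype (GoodMaps A B) :=
  @Subtype.fintype _ _ (fun _ => Classical.propDecidable _) _


lemma val_coe_untop' (a : Val) (h : a ≠ ⊤) : ((a.untopD 0 : NNRat) : Val) = a := by
  cases a with
  | none => exact absurd rfl h
  | some q => rfl

lemma sum_eq_sum_subtype {κ : Type} [Fintype κ] {M : Type} [AddCommMonoid M]
    (P : κ → Prop) (F : κ → M)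
    (h0 : ∀ k, ¬ P k → F k = 0) : ∑ k, F k = ∑ k : {k // P k}, F k := by
  classical
  rw [← Finset.sum_filter_of_ne (p := P) (fun k _ hk => by_contra fun hP => hk (h0 k hP))]
  rw [Finset.sum_subtype (p := P) (Finset.univ.filter P) (fun x => by simp) F]

lemma sum_eq_sum_subtype' {κ : Type} [Fintype κ] {M : Type} [AddCommMonoid M]
    (P : κ → Prop) (F : κ → M)
    (h0 : ∀ k, ¬ P k → F k = 0) :
    ∑ k, F k = @Finset.sum {k // P k} M _ (@Finset.univ _ (@Subtype.fintype _ _ (fun _ => Classical.propDecidable _) _)) (fun k => F k.1) := by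
  classical
  rw [← Finset.sum_filter_of_ne (p := P) (fun k _ hk => by_contra fun hP => hk (h0 k hP))]
  rw [Finset.sum_subtype (p := P) (Finset.univ.filter P) (fun x => by simp) F]

set_option maxHeartbeats 1000000 in
lemma forward (A B : VStruct S ar) (himp : Improves A B) :
    ∃ ω : (A.U → B.U) → NNRat, IsIFH A B ω := by
  by_contra hno
  have val_coe_sum : ∀ {κ : Type} (s : Finset κ) (f : κ → NNRat),
      ((∑ k ∈ s, f k : NNRat) : Val) = ∑ k ∈ s, ((f k : Val)) := by
    intro κ s f; exact_mod_cast rfl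
  let vv : GoodMaps A B → PairIdx B → ℚ :=
    fun g p => (((A.preSum B g.1 p.1.1 p.1.2).untopD 0 : NNRat) : ℚ)
  let bq : PairIdx B → ℚ := fun p => (((B.val p.1.1 p.1.2).untopD 0 : NNRat) : ℚ)
  have hbq0 : ∀ p, 0 ≤ bq p := fun p => NNRat.cast_nonneg _
  have hvv0 : ∀ g p, 0 ≤ vv g p := fun g p => NNRat.cast_nonneg _
  -- infeasibility of the primal LP
  have hLP : ¬ ∃ ω : GoodMaps A B → ℚ, (∀ g, 0 ≤ ω g) ∧ ∑ g, ω g = 1 ∧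
      ∀ p, ∑ g, ω g * vv g p ≤ bq p := by
    rintro ⟨ω, hω0, hω1, hωle⟩
    refine hno ⟨fun g => if h : ∀ p : PairIdx B, A.preSum B g p.1.1 p.1.2 ≠ ⊤
      then (ω ⟨g, h⟩).toNNRat else 0, ?_, ?_⟩
    · -- total weight is 1
      have e1 : ∑ g : A.U → B.U, (if h : ∀ p : PairIdx B, A.preSum B g p.1.1 p.1.2 ≠ ⊤
          then (ω ⟨g, h⟩).toNNRat else 0) = ∑ g : GoodMaps A B, (ω g).toNNRat := by
        rw [sum_eq_sum_subtype' (fun g => ∀ p : PairIdx B, A.preSum B g p.1.1 p.1.2 ≠ ⊤) _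
          (fun g hg => dif_neg hg)]
        exact Finset.sum_congr rfl fun g _ => dif_pos g.2
      rw [e1]
      have : ((∑ g : GoodMaps A B, (ω g).toNNRat : NNRat) : ℚ) = ((1 : NNRat) : ℚ) := by
        push_cast
        rw [Finset.sum_congr rfl fun g _ => Rat.coe_toNNRat _ (hω0 g), hω1]
      exact_mod_cast this
    · intro f x
      by_cases hB : B.val f x = ⊤
      · rw [hB]; exact le_top
      · have hsplit : (∑ g : A.U → B.U,
            ((if h : ∀ p : PairIdx B, A.preSum B g p.1.1 p.1.2 ≠ ⊤
              then (ω ⟨g, h⟩).toNNRat else 0 : NNRat) : Val) * A.preSum B g f x)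
            = ∑ g : GoodMaps A B, (((ω g).toNNRat : NNRat) : Val) * A.preSum B g.1 f x := by
          rw [sum_eq_sum_subtype' (fun g => ∀ p : PairIdx B, A.preSum B g p.1.1 p.1.2 ≠ ⊤) _
            (fun g hg => by rw [dif_neg hg]; simp)]
          refine Finset.sum_congr rfl fun g _ => ?_
          rw [dif_pos g.2]
        have hterm : ∀ g : GoodMaps A B, (((ω g).toNNRat : NNRat) : Val) * A.preSum B g.1 f x
            = (((ω g).toNNRat * (A.preSum B g.1 f x).untopD 0 : NNRat) : Val) := by
          intro g
          rw [WithTop.coe_mul, val_coe_untop' _ (g.2 ⟨⟨f, x⟩, hB⟩)]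
        rw [hsplit, Finset.sum_congr rfl fun g _ => hterm g, ← val_coe_sum,
          ← val_coe_untop' (B.val f x) hB]
        apply WithTop.coe_le_coe.mpr
        have hq : ((∑ g : GoodMaps A B, (ω g).toNNRat * (A.preSum B g.1 f x).untopD 0 : NNRat) : ℚ)
            ≤ (((B.val f x).untopD 0 : NNRat) : ℚ) := by
          push_cast
          calc ∑ g : GoodMaps A B, ((ω g).toNNRat : ℚ) * (((A.preSum B g.1 f x).untopD 0 : NNRat) : ℚ)
              = ∑ g : GoodMaps A B, ω g * vv g ⟨⟨f, x⟩, hB⟩ := Finset.sum_congr rfl fun g _ => by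
                rw [Rat.coe_toNNRat _ (hω0 g)]
            _ ≤ bq ⟨⟨f, x⟩, hB⟩ := hωle ⟨⟨f, x⟩, hB⟩
            _ = (((B.val f x).untopD 0 : NNRat) : ℚ) := rfl
        exact_mod_cast hq
  obtain ⟨y, z, hy0, hyb, hyv⟩ := mySeparation vv bq hLP
  -- perturb y to be strictly positive
  set sB : ℚ := ∑ p : PairIdx B, bq p with hsB
  have hsB0 : 0 ≤ sB := Finset.sum_nonneg fun p _ => hbq0 p
  set ε : ℚ := (z - ∑ p : PairIdx B, y p * bq p) / (sB + 1) with hε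
  have hεpos : 0 < ε := div_pos (by linarith) (by linarith)
  set y' : PairIdx B → ℚ := fun p => y p + ε with hy'
  have hy'pos : ∀ p, 0 < y' p := fun p => by
    have := hy0 p; simp only [hy']; linarith
  have hy'b : ∑ p : PairIdx B, y' p * bq p < z := by
    have e : ∑ p : PairIdx B, y' p * bq p = (∑ p : PairIdx B, y p * bq p) + ε * sB := by
      simp only [hy', add_mul, Finset.sum_add_distrib, hsB, Finset.mul_sum]
    have hlt : ε * sB < z - ∑ p : PairIdx B, y p * bq p := by
      rw [hε, div_mul_eq_mul_div, div_lt_iff₀ (by linarith)]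
      have h1 : 0 < z - ∑ p : PairIdx B, y p * bq p := by linarith
      nlinarith
    linarith [e.le, e.ge]
  have hy'v : ∀ g : GoodMaps A B, z ≤ ∑ p : PairIdx B, y' p * vv g p := by
    intro g
    have e : ∑ p : PairIdx B, y' p * vv g p
        = (∑ p : PairIdx B, y p * vv g p) + ε * ∑ p : PairIdx B, vv g p := by
      simp only [hy', add_mul, Finset.sum_add_distrib, Finset.mul_sum]
    have h2 : 0 ≤ ε * ∑ p : PairIdx B, vv g p :=
      mul_nonneg hεpos.le (Finset.sum_nonneg fun p _ => hvv0 g p)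
    have := hyv g
    linarith [e.le, e.ge]
  have hzpos : 0 < z :=
    lt_of_le_of_lt (Finset.sum_nonneg fun p _ => mul_nonneg (hy0 p) (hbq0 p)) hyb
  -- the witness structure C
  set C : VStruct S ar :=
    { U := B.U
      val := fun f x => if h : B.val f x ≠ ⊤
        then (((y' ⟨⟨f, x⟩, h⟩).toNNRat : NNRat) : Val) else 0 } with hC
  -- a generic regrouping of pair sums into the subtype of finite pairs
  have pair_sum : ∀ F : (p : Σ f : S, (Fin (ar f) → B.U)) → Val,
      (∑ f : S, ∑ x : Fin (ar f) → B.U, F ⟨f, x⟩)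
        = ∑ p : Σ f : S, (Fin (ar f) → B.U), F p := by
    intro F
    rw [← Finset.univ_sigma_univ, Finset.sum_sigma]
  have hCval : ∀ (p : PairIdx B), C.val p.1.1 p.1.2 = (((y' p).toNNRat : NNRat) : Val) := by
    intro p
    show dite _ _ _ = _
    rw [dif_pos p.2]
    rfl
  have hCval0 : ∀ (p : Σ f : S, (Fin (ar f) → B.U)), B.val p.1 p.2 = ⊤ → C.val p.1 p.2 = 0 := by
    intro p hp
    show dite _ _ _ = _
    rw [dif_neg (by simpa using hp)]
  have hCvalne : ∀ (p : PairIdx B), C.val p.1.1 p.1.2 ≠ 0 := by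
    intro p
    rw [hCval p]
    simp only [ne_eq, WithTop.coe_eq_zero]
    exact ne_of_gt (Rat.toNNRat_pos.mpr (hy'pos p))
  -- cost of the identity map from B to C
  have hBid : B.cost C id
      = ((∑ p : PairIdx B, (B.val p.1.1 p.1.2).untopD 0 * (y' p).toNNRat : NNRat) : Val) := by
    unfold VStruct.cost
    simp only [Function.id_comp]
    rw [pair_sum (fun p => B.val p.1 p.2 * C.val p.1 p.2)]
    rw [sum_eq_sum_subtype' (fun p => B.val p.1 p.2 ≠ ⊤) _
      (fun p hp => by rw [hCval0 p (not_not.mp hp), mul_zero])]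
    rw [val_coe_sum]
    refine Finset.sum_congr rfl fun p _ => ?_
    rw [WithTop.coe_mul, hCval p, val_coe_untop' _ p.2]
  have hBopt : B.opt C < ((z.toNNRat : NNRat) : Val) := by
    have h1 : B.opt C ≤ B.cost C id := Finset.inf'_le _ (Finset.mem_univ _)
    refine lt_of_le_of_lt (h1.trans_eq hBid) ?_
    have hq : ((∑ p : PairIdx B, (B.val p.1.1 p.1.2).untopD 0 * (y' p).toNNRat : NNRat) : ℚ)
        < ((z.toNNRat : NNRat) : ℚ) := by
      push_cast
      calc ∑ p : PairIdx B, (((B.val p.1.1 p.1.2).untopD 0 : NNRat) : ℚ) * ((y' p).toNNRat : ℚ)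
          = ∑ p : PairIdx B, y' p * bq p := Finset.sum_congr rfl fun p _ => by
            rw [Rat.coe_toNNRat _ (hy'pos p).le]; exact mul_comm _ _
        _ < z := hy'b
        _ = ((z.toNNRat : NNRat) : ℚ) := (Rat.coe_toNNRat _ hzpos.le).symm
    exact_mod_cast hq
  -- every map from A to C has cost at least z
  have hAcost : ∀ h : A.U → B.U, ((z.toNNRat : NNRat) : Val) ≤ A.cost C h := by
    intro h
    have hre : A.cost C h
        = ∑ p : Σ f : S, (Fin (ar f) → B.U), A.preSum B h p.1 p.2 * C.val p.1 p.2 := by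
      unfold VStruct.cost
      rw [Finset.sum_congr rfl fun f _ =>
        (regroup A B h f (fun x => C.val f x) :
          ∑ yy : Fin (ar f) → A.U, A.val f yy * C.val f (h ∘ yy)
            = ∑ x : Fin (ar f) → B.U, A.preSum B h f x * C.val f x)]
      exact pair_sum (fun p => A.preSum B h p.1 p.2 * C.val p.1 p.2)
    by_cases hGm : ∀ p : PairIdx B, A.preSum B h p.1.1 p.1.2 ≠ ⊤
    · have hfin : A.cost C h
          = ((∑ p : PairIdx B, (A.preSum B h p.1.1 p.1.2).untopD 0 * (y' p).toNNRat : NNRat) : Val) := by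
        rw [hre, sum_eq_sum_subtype' (fun p => B.val p.1 p.2 ≠ ⊤) _
          (fun p hp => by rw [hCval0 p (not_not.mp hp), mul_zero])]
        rw [val_coe_sum]
        refine Finset.sum_congr rfl fun p _ => ?_
        rw [WithTop.coe_mul, hCval p, val_coe_untop' _ (hGm p)]
      rw [hfin]
      have hq : ((z.toNNRat : NNRat) : ℚ)
          ≤ ((∑ p : PairIdx B, (A.preSum B h p.1.1 p.1.2).untopD 0 * (y' p).toNNRat : NNRat) : ℚ) := by
        push_cast
        calc ((z.toNNRat : NNRat) : ℚ) = z := Rat.coe_toNNRat _ hzpos.le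
          _ ≤ ∑ p : PairIdx B, y' p * vv ⟨h, hGm⟩ p := hy'v ⟨h, hGm⟩
          _ = ∑ p : PairIdx B, (((A.preSum B h p.1.1 p.1.2).untopD 0 : NNRat) : ℚ)
              * ((y' p).toNNRat : ℚ) := Finset.sum_congr rfl fun p _ => by
            rw [Rat.coe_toNNRat _ (hy'pos p).le]; exact mul_comm _ _
      exact_mod_cast hq
    · push_neg at hGm
      obtain ⟨p0, hp0⟩ := hGm
      have htop : A.cost C h = ⊤ := by
        rw [hre]
        have hterm : A.preSum B h p0.1.1 p0.1.2 * C.val p0.1.1 p0.1.2 = ⊤ := by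
          rw [hp0, WithTop.top_mul (hCvalne p0)]
        refine top_le_iff.mp ?_
        calc (⊤ : Val) = A.preSum B h p0.1.1 p0.1.2 * C.val p0.1.1 p0.1.2 := hterm.symm
          _ ≤ ∑ p : Σ f : S, (Fin (ar f) → B.U), A.preSum B h p.1 p.2 * C.val p.1 p.2 :=
            Finset.single_le_sum (f := fun p : Σ f : S, (Fin (ar f) → B.U) =>
              A.preSum B h p.1 p.2 * C.val p.1 p.2) (fun p _ => zero_le)
              (Finset.mem_univ p0.1)
      rw [htop]
      exact le_top
  have hAopt : ((z.toNNRat : NNRat) : Val) ≤ A.opt C :=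
    Finset.le_inf' _ _ fun h _ => hAcost h
  exact absurd (lt_of_le_of_lt (hAopt.trans (himp C)) hBopt) (lt_irrefl _)

/-- `A ≼ B` iff there exists an inverse fractional homomorphism from
`A` to `B`. -/
theorem stmt13 (A B : VStruct S ar) :
    Improves A B ↔ ∃ ω : (A.U → B.U) → NNRat, IsIFH A B ω :=
  ⟨fun h => forward A B h, fun ⟨ω, hω⟩ => backward A B ω hω⟩
end
end

section
/- Any separator of two covers of a bramble is itself a cover of that bramble. Precisely: let G be a graph, B a bramble of G, and X, Y ⊆ V(G) two covers of B. If Z ⊆ V(G) separates X from Y in G (every path from a vertex of X to a vertex of Y meets Z), then Z covers B. -/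
open scoped Classical
noncomputable section

/-- A bramble: a family of connected, pairwise touching vertex sets. -/
def IsBramble {V : Type} (G : SimpleGraph V) (B : Set (Set V)) : Prop :=
  (∀ b ∈ B, (G.induce b).Connected) ∧
  ∀ b₁ ∈ B, ∀ b₂ ∈ B,
    (b₁ ∩ b₂).Nonempty ∨ ∃ u ∈ b₁, ∃ v ∈ b₂, G.Adj u v

/-- `X` covers the bramble `B`: it meets every member of `B`. -/
def Covers {V : Type} (X : Set V) (B : Set (Set V)) : Prop :=
  ∀ b ∈ B, (X ∩ b).Nonempty

/-- Any separator of two covers of a bramble is itself a cover of that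
bramble. -/
theorem stmt15 {V : Type} (G : SimpleGraph V) (B : Set (Set V))
    (hB : IsBramble G B) (X Y Z : Set V)
    (hX : Covers X B) (hY : Covers Y B)
    (hZ : ∀ u ∈ X, ∀ v ∈ Y, ∀ p : G.Walk u v, ∃ z ∈ p.support, z ∈ Z) :
    Covers Z B := by
  intro b hb
  obtain ⟨x, hxX, hxb⟩ := hX b hb
  obtain ⟨y, hyY, hyb⟩ := hY b hb
  have hconn := hB.1 b hb
  obtain ⟨q⟩ := hconn ⟨x, hxb⟩ ⟨y, hyb⟩
  let p := q.map (SimpleGraph.Embedding.induce b).toHom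
  obtain ⟨z, hzs, hzZ⟩ := hZ x hxX y hyY p
  refine ⟨z, hzZ, ?_⟩
  have : z ∈ p.support := hzs
  rw [SimpleGraph.Walk.support_map] at this
  obtain ⟨w, _, rfl⟩ := List.mem_map.mp this
  exact w.2
end
end

section
/- For n ≥ 1 consider the directed n×n grid with vertex set {1,…,n}², arcs from (i,j) to (i',j') whenever i ≤ i', j ≤ j' and (i'−i)+(j'−j) = 1, and the path weight function ψ defined by: for an arc ((i,j),(i',j')) ending in diagonal k = i'+j'−1 ≤ n, ψ = j/(i+j) if i'=i and ψ = i/(i+j) if j'=j; for an arc ending in diagonal k > n, ψ = (n−j'+1)/(2n−i'−j'+1) if i'=i and ψ = (n−i'+1)/(2n−i'−j'+1) if j'=j. Then for every vertex (i,j) in diagonal k (i.e., i+j−1 = k), the sum over all monotone paths P from (1,1) to (n,n) passing through (i,j) of the product of ψ over the arcs of P equals 1/k if k ≤ n and 1/(2n−k) if k > n. -/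
open scoped Classical
noncomputable section


/-- Arc of the directed grid, in 1-based coordinates. -/
def gArc (a b : ℕ × ℕ) : Prop :=
  (b.1 = a.1 + 1 ∧ b.2 = a.2) ∨ (b.1 = a.1 ∧ b.2 = a.2 + 1)

/-- The weight `ψ` of an arc `(a, b)` of the `n × n` grid. -/
def psi (n : ℕ) (a b : ℕ × ℕ) : ℚ :=
  if b.1 + b.2 - 1 ≤ n then
    (if b.1 = a.1 then (a.2 : ℚ) / ((a.1 : ℚ) + (a.2 : ℚ))
     else (a.1 : ℚ) / ((a.1 : ℚ) + (a.2 : ℚ)))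
  else
    (if b.1 = a.1 then ((n - b.2 + 1 : ℕ) : ℚ) / ((2 * n - b.1 - b.2 + 1 : ℕ) : ℚ)
     else ((n - b.1 + 1 : ℕ) : ℚ) / ((2 * n - b.1 - b.2 + 1 : ℕ) : ℚ))

/-- 1-based coordinates of a grid vertex. -/
def toNN {n : ℕ} (v : Fin n × Fin n) : ℕ × ℕ := (v.1.val + 1, v.2.val + 1)

/-- `P` is a monotone path from `(1,1)` to `(n,n)` (a sequence of `2n-1`
vertices, consecutive ones forming arcs). -/
def IsMonoPath (n : ℕ) (P : Fin (2 * n - 1) → Fin n × Fin n) : Prop :=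
  (∀ h0 : 0 < 2 * n - 1, toNN (P ⟨0, h0⟩) = (1, 1)) ∧
  (∀ hl : 2 * n - 2 < 2 * n - 1, toNN (P ⟨2 * n - 2, hl⟩) = (n, n)) ∧
  ∀ (m : ℕ) (hm : m + 1 < 2 * n - 1),
    gArc (toNN (P ⟨m, by omega⟩)) (toNN (P ⟨m + 1, hm⟩))

/-- The product of `ψ` over the arcs of a path. -/
def pathWeight (n : ℕ) (P : Fin (2 * n - 1) → Fin n × Fin n) : ℚ :=
  ∏ m : Fin (2 * n - 2),
    psi n (toNN (P ⟨m.val, by have := m.isLt; omega⟩))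
          (toNN (P ⟨m.val + 1, by have := m.isLt; omega⟩))


namespace Stmt16Aux

open Finset

variable {V : Type*} [Fintype V] [DecidableEq V]

private lemma sum_filter_swap {α M : Type*} [AddCommMonoid M] {p q : α → Prop}
    {hp : DecidablePred p} {hq : DecidablePred q} {s : Finset α} (h : ∀ a, p a ↔ q a) (f : α → M) :
    ∑ a ∈ @Finset.filter α p hp s, f a = ∑ a ∈ @Finset.filter α q hq s, f a := by
  rw [@Finset.filter_congr α p q hp hq s (fun x _ => h x)]

private lemma peel (A : Matrix V V ℚ) (L : ℕ) (C : (Fin (L + 1) → V) → Prop) (t : V) :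
    (∑ P ∈ univ.filter (fun P : Fin (L + 2) → V =>
        C (fun i => P i.castSucc) ∧ P (Fin.last (L + 1)) = t),
      ∏ m : Fin (L + 1), A (P m.castSucc) (P m.succ)) =
    ∑ u : V, (∑ Q ∈ univ.filter (fun Q : Fin (L + 1) → V => C Q ∧ Q (Fin.last L) = u),
      ∏ m : Fin L, A (Q m.castSucc) (Q m.succ)) * A u t := by
  classical
  have step1 : ∀ u ∈ (univ : Finset V),
      (∑ Q ∈ univ.filter (fun Q : Fin (L + 1) → V => C Q ∧ Q (Fin.last L) = u),
        ∏ m : Fin L, A (Q m.castSucc) (Q m.succ)) * A u t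
      = ∑ Q ∈ (univ.filter (fun Q : Fin (L + 1) → V => C Q)).filter
          (fun Q => Q (Fin.last L) = u),
          (∏ m : Fin L, A (Q m.castSucc) (Q m.succ)) * A (Q (Fin.last L)) t := by
    intro u _
    rw [Finset.filter_filter, Finset.sum_mul]
    exact Finset.sum_congr rfl fun Q hQ => by
      rw [(Finset.mem_filter.mp hQ).2.2]
  rw [Finset.sum_congr rfl step1,
    Finset.sum_fiberwise (univ.filter (fun Q : Fin (L + 1) → V => C Q))
      (fun Q => Q (Fin.last L))
      (fun Q => (∏ m : Fin L, A (Q m.castSucc) (Q m.succ)) * A (Q (Fin.last L)) t)]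
  rw [Finset.sum_filter, Finset.sum_filter]
  let e : ((Fin (L + 1) → V) × V) ≃ (Fin (L + 2) → V) :=
    { toFun := fun Qx => Fin.snoc Qx.1 Qx.2
      invFun := fun P => (fun i => P i.castSucc, P (Fin.last (L + 1)))
      left_inv := by
        rintro ⟨Q, x⟩
        simp [Fin.snoc_castSucc, Fin.snoc_last]
      right_inv := by
        intro P
        exact Fin.snoc_init_self (α := fun _ => V) P }
  rw [← Equiv.sum_comp e (fun P : Fin (L + 2) → V =>
    if C (fun i => P i.castSucc) ∧ P (Fin.last (L + 1)) = t then
      ∏ m : Fin (L + 1), A (P m.castSucc) (P m.succ) else 0)]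
  rw [Fintype.sum_prod_type]
  refine Finset.sum_congr rfl fun Q _ => ?_
  have hQx : ∀ x : V, (if C (fun i => (e (Q, x)) i.castSucc) ∧ (e (Q, x)) (Fin.last (L + 1)) = t
      then ∏ m : Fin (L + 1), A ((e (Q, x)) m.castSucc) ((e (Q, x)) m.succ) else 0)
      = (if C Q ∧ x = t then
          (∏ m : Fin L, A (Q m.castSucc) (Q m.succ)) * A (Q (Fin.last L)) x else 0) := by
    intro x
    simp only [e, Equiv.coe_fn_mk]
    change (if C (fun i => (Fin.snoc Q x : Fin (L + 2) → V) i.castSucc) ∧ (Fin.snoc Q x : Fin (L + 2) → V) (Fin.last (L + 1)) = t then ∏ m : Fin (L + 1), A ((Fin.snoc Q x : Fin (L + 2) → V) m.castSucc) ((Fin.snoc Q x : Fin (L + 2) → V) m.succ) else 0) = _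
    have h1 : (fun i : Fin (L + 1) => (Fin.snoc Q x : Fin (L + 2) → V) i.castSucc) = Q := by
      funext i; exact Fin.snoc_castSucc ..
    have h2 : (Fin.snoc Q x : Fin (L + 2) → V) (Fin.last (L + 1)) = x := Fin.snoc_last ..
    have h3 : (∏ m : Fin (L + 1), A ((Fin.snoc Q x : Fin (L + 2) → V) m.castSucc) ((Fin.snoc Q x : Fin (L + 2) → V) m.succ))
        = (∏ m : Fin L, A (Q m.castSucc) (Q m.succ)) * A (Q (Fin.last L)) x := by
      rw [Fin.prod_univ_castSucc]
      congr 1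
      · refine Finset.prod_congr rfl fun m _ => ?_
        rw [Fin.succ_castSucc, Fin.snoc_castSucc, Fin.snoc_castSucc]
      · rw [Fin.succ_last, Fin.snoc_castSucc, Fin.snoc_last]
    rw [h1, h2, h3]
  rw [Finset.sum_congr rfl fun x _ => hQx x]
  by_cases hC : C Q
  · simp only [hC, true_and, if_pos]
    rw [Finset.sum_ite_eq' univ t
      (fun x => (∏ m : Fin L, A (Q m.castSucc) (Q m.succ)) * A (Q (Fin.last L)) x)]
    simp
  · simp [hC]


private lemma path_sum (A : Matrix V V ℚ) (L : ℕ) (s t : V) :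
    (∑ P ∈ univ.filter (fun P : Fin (L + 1) → V =>
        P ⟨0, Nat.succ_pos L⟩ = s ∧ P (Fin.last L) = t),
      ∏ m : Fin L, A (P m.castSucc) (P m.succ)) = (A ^ L) s t := by
  induction L generalizing t with
  | zero =>
    rw [pow_zero]
    by_cases hst : s = t
    · subst hst
      have hfilter : (univ.filter (fun P : Fin 1 → V =>
          P ⟨0, Nat.succ_pos 0⟩ = s ∧ P (Fin.last 0) = s)) = {fun _ => s} := by
        ext P
        simp only [Finset.mem_filter, Finset.mem_univ, true_and, Finset.mem_singleton]
        constructor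
        · rintro ⟨h1, -⟩
          funext i
          rw [Subsingleton.elim i ⟨0, Nat.succ_pos 0⟩, h1]
        · rintro rfl
          exact ⟨rfl, rfl⟩
      rw [hfilter, Finset.sum_singleton, Matrix.one_apply_eq]
      simp
    · have hfilter : (univ.filter (fun P : Fin 1 → V =>
          P ⟨0, Nat.succ_pos 0⟩ = s ∧ P (Fin.last 0) = t)) = ∅ := by
        ext P
        simp only [Finset.mem_filter, Finset.mem_univ, true_and,
          Finset.notMem_empty, iff_false, not_and]
        intro h1 h2
        exact hst (h1.symm.trans (by rw [Subsingleton.elim (⟨0, Nat.succ_pos 0⟩ : Fin 1) (Fin.last 0)]; exact h2))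
      rw [hfilter, Finset.sum_empty, Matrix.one_apply_ne hst]
  | succ L ih =>
    rw [pow_succ, Matrix.mul_apply]
    refine Eq.trans (Eq.trans ?_ (peel A L (fun Q => Q ⟨0, Nat.succ_pos L⟩ = s) t)) ?_
    · exact sum_filter_swap (fun P => Iff.rfl) _
    refine Finset.sum_congr rfl fun u _ => ?_
    refine congrArg (· * A u t) (Eq.trans ?_ (ih u))
    exact sum_filter_swap (fun Q => Iff.rfl) _
private lemma path_sum_through (A : Matrix V V ℚ) (L : ℕ) (a : ℕ) (s w : V) :
    ∀ (t : V) (ha : a ≤ L),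
    (∑ P ∈ univ.filter (fun P : Fin (L + 1) → V =>
        P ⟨0, Nat.succ_pos L⟩ = s ∧ P ⟨a, by omega⟩ = w ∧ P (Fin.last L) = t),
      ∏ m : Fin L, A (P m.castSucc) (P m.succ)) = (A ^ a) s w * (A ^ (L - a)) w t := by
  induction L with
  | zero =>
    intro t ha
    obtain rfl : a = 0 := by omega
    rw [pow_zero]
    by_cases hswt : s = w ∧ w = t
    · obtain ⟨rfl, rfl⟩ := hswt
      have hfilter : (univ.filter (fun P : Fin 1 → V =>
          P ⟨0, Nat.succ_pos 0⟩ = s ∧ P ⟨0, by omega⟩ = s ∧ P (Fin.last 0) = s))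
          = {fun _ => s} := by
        ext P
        simp only [Finset.mem_filter, Finset.mem_univ, true_and, Finset.mem_singleton]
        constructor
        · rintro ⟨h1, -, -⟩
          funext i
          rw [Subsingleton.elim i ⟨0, Nat.succ_pos 0⟩, h1]
        · rintro rfl
          exact ⟨rfl, rfl, rfl⟩
      rw [hfilter, Finset.sum_singleton, Matrix.one_apply_eq]
      simp
    · have hfilter : (univ.filter (fun P : Fin 1 → V =>
          P ⟨0, Nat.succ_pos 0⟩ = s ∧ P ⟨0, by omega⟩ = w ∧ P (Fin.last 0) = t)) = ∅ := by
        rw [Finset.filter_eq_empty_iff]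
        rintro P - ⟨h1, h2, h3⟩
        exact hswt ⟨h1.symm.trans h2, h2.symm.trans h3⟩
      rw [hfilter, Finset.sum_empty]
      rcases not_and_or.mp hswt with h | h
      · rw [Matrix.one_apply_ne h, zero_mul]
      · rw [Matrix.one_apply_ne h, mul_zero]
  | succ L ih =>
    intro t ha
    by_cases haL : a ≤ L
    · rw [show L + 1 - a = (L - a) + 1 from by omega, pow_succ, Matrix.mul_apply,
        Finset.mul_sum]
      refine Eq.trans (Eq.trans ?_
        (peel A L (fun Q => Q ⟨0, Nat.succ_pos L⟩ = s ∧ Q ⟨a, by omega⟩ = w) t)) ?_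
      · exact sum_filter_swap (fun P => and_assoc.symm) _
      refine Finset.sum_congr rfl fun u _ => ?_
      refine Eq.trans (congrArg (· * A u t)
        (Eq.trans ?_ (ih u haL))) ?_
      · exact sum_filter_swap (fun Q => and_assoc) _
      · exact mul_assoc _ _ _
    · obtain rfl : a = L + 1 := by omega
      rw [Nat.sub_self, pow_zero]
      by_cases hwt : w = t
      · subst hwt
        rw [Matrix.one_apply_eq, mul_one]
        refine Eq.trans ?_ (path_sum A (L + 1) s w)
        exact sum_filter_swap (fun P => ⟨fun h => ⟨h.1, h.2.2⟩, fun h => ⟨h.1, h.2, h.2⟩⟩) _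
      · rw [Matrix.one_apply_ne hwt, mul_zero]
        rw [Finset.filter_eq_empty_iff.mpr
          (fun P _ => fun h => hwt (h.2.1.symm.trans h.2.2)), Finset.sum_empty]

private lemma path_sum_through' (A : Matrix V V ℚ) (N L a : ℕ) (hN : N = L + 1)
    (ha : a ≤ L) (s w t : V) :
    (∑ P ∈ univ.filter (fun P : Fin N → V =>
        P ⟨0, by omega⟩ = s ∧ P ⟨a, by omega⟩ = w ∧ P ⟨L, by omega⟩ = t),
      ∏ m : Fin (N - 1), A (P ⟨m.val, by have := m.isLt; omega⟩)
        (P ⟨m.val + 1, by have := m.isLt; omega⟩)) = (A ^ a) s w * (A ^ (L - a)) w t := by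
  subst hN
  refine Eq.trans ?_ (path_sum_through A L a s w t ha)
  exact sum_filter_swap (fun P => Iff.rfl) _

private def Mg (n : ℕ) : Matrix (Fin n × Fin n) (Fin n × Fin n) ℚ :=
  Matrix.of fun u v => if gArc (toNN u) (toNN v) then psi n (toNN u) (toNN v) else 0

private lemma Mg_arc {n : ℕ} (u v : Fin n × Fin n) (h : gArc (toNN u) (toNN v)) :
    Mg n u v = psi n (toNN u) (toNN v) := by
  simp only [Mg, Matrix.of_apply, if_pos h]

private lemma Mg_nonarc {n : ℕ} (u v : Fin n × Fin n) (h : ¬ gArc (toNN u) (toNN v)) :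
    Mg n u v = 0 := by
  simp only [Mg, Matrix.of_apply, if_neg h]

private lemma arc_iff {n : ℕ} (u v : Fin n × Fin n) :
    gArc (toNN u) (toNN v) ↔
      (v.1.val = u.1.val + 1 ∧ v.2.val = u.2.val) ∨
      (v.1.val = u.1.val ∧ v.2.val = u.2.val + 1) := by
  simp only [gArc, toNN, Prod.mk.injEq]
  omega

private lemma pext {n : ℕ} {u v : Fin n × Fin n} (h1 : u.1.val = v.1.val)
    (h2 : u.2.val = v.2.val) : u = v :=
  Prod.ext (Fin.ext h1) (Fin.ext h2)

private lemma psi_horiz_low {n x y d : ℕ} (hd : x + y = d + 1) (hdn : d + 2 ≤ n) :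
    psi n (x, y + 1) (x + 1, y + 1) = (x : ℚ) / ((d + 2 : ℕ) : ℚ) := by
  have hc : x + 1 + (y + 1) - 1 ≤ n := by omega
  have hb : ¬ (x + 1 = x) := by omega
  simp only [psi, if_pos hc, if_neg hb]
  rw [show (x : ℚ) + ((y + 1 : ℕ) : ℚ) = ((d + 2 : ℕ) : ℚ) from by
    exact_mod_cast (by omega : x + (y + 1) = d + 2)]

private lemma psi_vert_low {n x y d : ℕ} (hd : x + y = d + 1) (hdn : d + 2 ≤ n) :
    psi n (x + 1, y) (x + 1, y + 1) = (y : ℚ) / ((d + 2 : ℕ) : ℚ) := by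
  have hc : x + 1 + (y + 1) - 1 ≤ n := by omega
  simp only [psi, if_pos hc, if_pos rfl, if_true]
  rw [show ((x + 1 : ℕ) : ℚ) + (y : ℚ) = ((d + 2 : ℕ) : ℚ) from by
    exact_mod_cast (by omega : (x + 1) + y = d + 2)]

private lemma psi_horiz_high {n x y d : ℕ} (hd : x + y = d + 1) (hdn : n < d + 2)
    (hx : x + 1 ≤ n) (hy : y + 1 ≤ n) :
    psi n (x, y + 1) (x + 1, y + 1) = ((n - x : ℕ) : ℚ) / ((2 * n - d - 2 : ℕ) : ℚ) := by
  have hc : ¬ (x + 1 + (y + 1) - 1 ≤ n) := by omega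
  have hb : ¬ (x + 1 = x) := by omega
  simp only [psi, if_neg hc, if_neg hb]
  rw [show n - (x + 1) + 1 = n - x from by omega,
    show 2 * n - (x + 1) - (y + 1) + 1 = 2 * n - d - 2 from by omega]

private lemma psi_vert_high {n x y d : ℕ} (hd : x + y = d + 1) (hdn : n < d + 2)
    (hx : x + 1 ≤ n) (hy : y + 1 ≤ n) :
    psi n (x + 1, y) (x + 1, y + 1) = ((n - y : ℕ) : ℚ) / ((2 * n - d - 2 : ℕ) : ℚ) := by
  have hc : ¬ (x + 1 + (y + 1) - 1 ≤ n) := by omega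
  simp only [psi, if_neg hc, if_pos rfl, if_true]
  rw [show n - (y + 1) + 1 = n - y from by omega,
    show 2 * n - (x + 1) - (y + 1) + 1 = 2 * n - d - 2 from by omega]

private lemma fwd {n : ℕ} (hn : 1 ≤ n) :
    ∀ (a : ℕ), ∀ (v : Fin n × Fin n), a ≤ 2 * n - 2 → v.1.val + v.2.val = a →
    (Mg n ^ a) (⟨0, hn⟩, ⟨0, hn⟩) v
      = if a + 1 ≤ n then 1 / ((a + 1 : ℕ) : ℚ) else 1 / ((2 * n - (a + 1) : ℕ) : ℚ) := by
  intro a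
  induction a with
  | zero =>
    intro v _ hv
    obtain rfl : ((⟨0, hn⟩, ⟨0, hn⟩) : Fin n × Fin n) = v :=
      pext (by show (0 : ℕ) = v.1.val; omega) (by show (0 : ℕ) = v.2.val; omega)
    rw [pow_zero, Matrix.one_apply_eq, if_pos (by omega)]
    norm_num
  | succ a ih =>
    intro v ha hv
    have hi1 := v.1.isLt
    have hj1 := v.2.isLt
    rw [pow_succ, Matrix.mul_apply]
    by_cases hi : v.1.val = 0
    · -- only predecessor u2 = (v.1, v.2 - 1); low diagonal automatically
      have hj : 1 ≤ v.2.val := by omega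
      have hdn : a + 2 ≤ n := by omega
      have hzero : ∀ c ∈ (Finset.univ : Finset (Fin n × Fin n)),
          c ≠ (v.1, (⟨v.2.val - 1, by omega⟩ : Fin n)) →
          (Mg n ^ a) (⟨0, hn⟩, ⟨0, hn⟩) c * Mg n c v = 0 := by
        rintro c - hc
        have hnc : ¬ gArc (toNN c) (toNN v) := by
          intro harc
          rcases (arc_iff c v).mp harc with ⟨e1, e2⟩ | ⟨e1, e2⟩
          · omega
          · exact hc (pext (by show c.1.val = v.1.val; omega)
              (by show c.2.val = v.2.val - 1; omega))
        rw [Mg_nonarc c v hnc, mul_zero]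
      rw [Finset.sum_eq_single_of_mem (v.1, (⟨v.2.val - 1, by omega⟩ : Fin n))
        (Finset.mem_univ _) hzero]
      rw [ih (v.1, ⟨v.2.val - 1, by omega⟩) (by omega)
        (by show v.1.val + (v.2.val - 1) = a; omega)]
      rw [Mg_arc (v.1, (⟨v.2.val - 1, by omega⟩ : Fin n)) v ((arc_iff (v.1, (⟨v.2.val - 1, by omega⟩ : Fin n)) v).mpr (Or.inr ⟨by show v.1.val = v.1.val; rfl, by show v.2.val = v.2.val - 1 + 1; omega⟩))]
      rw [show toNN (v.1, (⟨v.2.val - 1, by omega⟩ : Fin n)) = (v.1.val + 1, v.2.val) from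
        congrArg (Prod.mk (v.1.val + 1)) (by omega : v.2.val - 1 + 1 = v.2.val)]
      rw [show toNN v = (v.1.val + 1, v.2.val + 1) from rfl]
      rw [psi_vert_low (by omega : v.1.val + v.2.val = a + 1) hdn]
      rw [if_pos (by omega : a + 1 ≤ n), if_pos (by omega : a + 1 + 1 ≤ n)]
      rw [show (v.2.val : ℚ) = ((a + 1 : ℕ) : ℚ) from Nat.cast_inj.mpr (by omega)]
      rw [show ((a + 1 + 1 : ℕ) : ℚ) = ((a + 2 : ℕ) : ℚ) from Nat.cast_inj.mpr (by omega)]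
      have h1 : ((a + 1 : ℕ) : ℚ) ≠ 0 := Nat.cast_ne_zero.mpr (by omega)
      have h2 : ((a + 2 : ℕ) : ℚ) ≠ 0 := Nat.cast_ne_zero.mpr (by omega)
      field_simp
    · by_cases hj : v.2.val = 0
      · -- only predecessor u1 = (v.1 - 1, v.2); low diagonal automatically
        have hdn : a + 2 ≤ n := by omega
        have hzero : ∀ c ∈ (Finset.univ : Finset (Fin n × Fin n)),
            c ≠ ((⟨v.1.val - 1, by omega⟩ : Fin n), v.2) →
            (Mg n ^ a) (⟨0, hn⟩, ⟨0, hn⟩) c * Mg n c v = 0 := by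
          rintro c - hc
          have hnc : ¬ gArc (toNN c) (toNN v) := by
            intro harc
            rcases (arc_iff c v).mp harc with ⟨e1, e2⟩ | ⟨e1, e2⟩
            · exact hc (pext (by show c.1.val = v.1.val - 1; omega)
                (by show c.2.val = v.2.val; omega))
            · omega
          rw [Mg_nonarc c v hnc, mul_zero]
        rw [Finset.sum_eq_single_of_mem ((⟨v.1.val - 1, by omega⟩ : Fin n), v.2)
          (Finset.mem_univ _) hzero]
        rw [ih (⟨v.1.val - 1, by omega⟩, v.2) (by omega)
          (by show v.1.val - 1 + v.2.val = a; omega)]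
        rw [Mg_arc ((⟨v.1.val - 1, by omega⟩ : Fin n), v.2) v ((arc_iff ((⟨v.1.val - 1, by omega⟩ : Fin n), v.2) v).mpr (Or.inl ⟨by show v.1.val = v.1.val - 1 + 1; omega, by show v.2.val = v.2.val; rfl⟩))]
        rw [show toNN ((⟨v.1.val - 1, by omega⟩ : Fin n), v.2) = (v.1.val, v.2.val + 1) from
          congrArg (fun z => (z, v.2.val + 1)) (by omega : v.1.val - 1 + 1 = v.1.val)]
        rw [show toNN v = (v.1.val + 1, v.2.val + 1) from rfl]
        rw [psi_horiz_low (by omega : v.1.val + v.2.val = a + 1) hdn]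
        rw [if_pos (by omega : a + 1 ≤ n), if_pos (by omega : a + 1 + 1 ≤ n)]
        rw [show (v.1.val : ℚ) = ((a + 1 : ℕ) : ℚ) from Nat.cast_inj.mpr (by omega)]
        rw [show ((a + 1 + 1 : ℕ) : ℚ) = ((a + 2 : ℕ) : ℚ) from Nat.cast_inj.mpr (by omega)]
        have h1 : ((a + 1 : ℕ) : ℚ) ≠ 0 := Nat.cast_ne_zero.mpr (by omega)
        have h2 : ((a + 2 : ℕ) : ℚ) ≠ 0 := Nat.cast_ne_zero.mpr (by omega)
        field_simp
      · -- two predecessors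
        have hu12 : ((⟨v.1.val - 1, by omega⟩ : Fin n), v.2)
            ≠ (v.1, (⟨v.2.val - 1, by omega⟩ : Fin n)) := by
          intro h
          have h' := congrArg (fun z : Fin n × Fin n => z.1.val) h
          have h'' : v.1.val - 1 = v.1.val := h'
          omega
        have hzero : ∀ c ∈ (Finset.univ : Finset (Fin n × Fin n)),
            c ≠ ((⟨v.1.val - 1, by omega⟩ : Fin n), v.2) ∧
            c ≠ (v.1, (⟨v.2.val - 1, by omega⟩ : Fin n)) →
            (Mg n ^ a) (⟨0, hn⟩, ⟨0, hn⟩) c * Mg n c v = 0 := by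
          rintro c - ⟨hc1, hc2⟩
          have hnc : ¬ gArc (toNN c) (toNN v) := by
            intro harc
            rcases (arc_iff c v).mp harc with ⟨e1, e2⟩ | ⟨e1, e2⟩
            · exact hc1 (pext (by show c.1.val = v.1.val - 1; omega)
                (by show c.2.val = v.2.val; omega))
            · exact hc2 (pext (by show c.1.val = v.1.val; omega)
                (by show c.2.val = v.2.val - 1; omega))
          rw [Mg_nonarc c v hnc, mul_zero]
        rw [Finset.sum_eq_add_of_mem ((⟨v.1.val - 1, by omega⟩ : Fin n), v.2)
          (v.1, (⟨v.2.val - 1, by omega⟩ : Fin n))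
          (Finset.mem_univ _) (Finset.mem_univ _) hu12 hzero]
        rw [ih (⟨v.1.val - 1, by omega⟩, v.2) (by omega)
          (by show v.1.val - 1 + v.2.val = a; omega)]
        rw [ih (v.1, ⟨v.2.val - 1, by omega⟩) (by omega)
          (by show v.1.val + (v.2.val - 1) = a; omega)]
        rw [Mg_arc ((⟨v.1.val - 1, by omega⟩ : Fin n), v.2) v ((arc_iff ((⟨v.1.val - 1, by omega⟩ : Fin n), v.2) v).mpr (Or.inl ⟨by show v.1.val = v.1.val - 1 + 1; omega, by show v.2.val = v.2.val; rfl⟩))]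
        rw [Mg_arc (v.1, (⟨v.2.val - 1, by omega⟩ : Fin n)) v ((arc_iff (v.1, (⟨v.2.val - 1, by omega⟩ : Fin n)) v).mpr (Or.inr ⟨by show v.1.val = v.1.val; rfl, by show v.2.val = v.2.val - 1 + 1; omega⟩))]
        rw [show toNN ((⟨v.1.val - 1, by omega⟩ : Fin n), v.2) = (v.1.val, v.2.val + 1) from
          congrArg (fun z => (z, v.2.val + 1)) (by omega : v.1.val - 1 + 1 = v.1.val)]
        rw [show toNN (v.1, (⟨v.2.val - 1, by omega⟩ : Fin n)) = (v.1.val + 1, v.2.val) from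
          congrArg (Prod.mk (v.1.val + 1)) (by omega : v.2.val - 1 + 1 = v.2.val)]
        rw [show toNN v = (v.1.val + 1, v.2.val + 1) from rfl]
        by_cases hdn : a + 2 ≤ n
        · rw [psi_horiz_low (by omega : v.1.val + v.2.val = a + 1) hdn,
            psi_vert_low (by omega : v.1.val + v.2.val = a + 1) hdn]
          rw [if_pos (by omega : a + 1 ≤ n), if_pos (by omega : a + 1 + 1 ≤ n)]
          rw [show ((a + 1 + 1 : ℕ) : ℚ) = ((a + 2 : ℕ) : ℚ) from Nat.cast_inj.mpr (by omega)]
          rw [← mul_add, ← add_div]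
          rw [show (v.1.val : ℚ) + (v.2.val : ℚ) = ((a + 1 : ℕ) : ℚ) from by exact_mod_cast hv]
          have h1 : ((a + 1 : ℕ) : ℚ) ≠ 0 := Nat.cast_ne_zero.mpr (by omega)
          have h2 : ((a + 2 : ℕ) : ℚ) ≠ 0 := Nat.cast_ne_zero.mpr (by omega)
          field_simp
        · rw [psi_horiz_high (by omega : v.1.val + v.2.val = a + 1) (by omega)
            (by omega) (by omega)]
          rw [psi_vert_high (by omega : v.1.val + v.2.val = a + 1) (by omega)
            (by omega) (by omega)]
          have hF : (if a + 1 ≤ n then 1 / ((a + 1 : ℕ) : ℚ)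
              else 1 / ((2 * n - (a + 1) : ℕ) : ℚ)) = 1 / ((2 * n - a - 1 : ℕ) : ℚ) := by
            split_ifs with h
            · rw [show (2 * n - a - 1 : ℕ) = a + 1 from by omega]
            · rw [show (2 * n - (a + 1) : ℕ) = 2 * n - a - 1 from by omega]
          rw [hF]
          rw [if_neg (by omega : ¬ (a + 1 + 1 ≤ n))]
          rw [← mul_add, ← add_div]
          rw [show ((n - v.1.val : ℕ) : ℚ) + ((n - v.2.val : ℕ) : ℚ) = ((2 * n - a - 1 : ℕ) : ℚ)
            from by exact_mod_cast (by omega : (n - v.1.val) + (n - v.2.val) = 2 * n - a - 1)]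
          rw [show (2 * n - (a + 1 + 1) : ℕ) = 2 * n - a - 2 from by omega]
          have h1 : ((2 * n - a - 1 : ℕ) : ℚ) ≠ 0 := Nat.cast_ne_zero.mpr (by omega)
          have h2 : ((2 * n - a - 2 : ℕ) : ℚ) ≠ 0 := Nat.cast_ne_zero.mpr (by omega)
          field_simp

private lemma bwd {n : ℕ} (hn : 1 ≤ n) :
    ∀ (r : ℕ), ∀ (v : Fin n × Fin n), r ≤ 2 * n - 2 → v.1.val + v.2.val = 2 * n - 2 - r →
    (Mg n ^ r) v ((⟨n - 1, by omega⟩ : Fin n), (⟨n - 1, by omega⟩ : Fin n)) = 1 := by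
  intro r
  induction r with
  | zero =>
    intro v _ hv
    have hi1 := v.1.isLt
    have hj1 := v.2.isLt
    have hveq : v = (((⟨n - 1, by omega⟩ : Fin n), (⟨n - 1, by omega⟩ : Fin n)) : Fin n × Fin n) :=
      pext (by show v.1.val = n - 1; omega) (by show v.2.val = n - 1; omega)
    rw [pow_zero, hveq, Matrix.one_apply_eq]
  | succ r ih =>
    intro v hr hv
    have hi1 := v.1.isLt
    have hj1 := v.2.isLt
    rw [pow_succ', Matrix.mul_apply]
    by_cases hi : v.1.val = n - 1
    · -- only successor w2 = (v.1, v.2+1); high diagonal automatically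
      have hj : v.2.val + 1 ≤ n - 1 := by omega
      have hzero : ∀ c ∈ (Finset.univ : Finset (Fin n × Fin n)),
          c ≠ (v.1, (⟨v.2.val + 1, by omega⟩ : Fin n)) →
          Mg n v c * (Mg n ^ r) c ((⟨n - 1, by omega⟩ : Fin n), (⟨n - 1, by omega⟩ : Fin n)) = 0 := by
        rintro c - hc
        have hnc : ¬ gArc (toNN v) (toNN c) := by
          intro harc
          rcases (arc_iff v c).mp harc with ⟨e1, e2⟩ | ⟨e1, e2⟩
          · have := c.1.isLt; omega
          · exact hc (pext (by show c.1.val = v.1.val; omega)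
              (by show c.2.val = v.2.val + 1; omega))
        rw [Mg_nonarc v c hnc, zero_mul]
      rw [Finset.sum_eq_single_of_mem (v.1, (⟨v.2.val + 1, by omega⟩ : Fin n))
        (Finset.mem_univ _) hzero]
      rw [ih (v.1, ⟨v.2.val + 1, by omega⟩) (by omega)
        (by show v.1.val + (v.2.val + 1) = 2 * n - 2 - r; omega)]
      rw [mul_one]
      rw [Mg_arc v (v.1, (⟨v.2.val + 1, by omega⟩ : Fin n)) ((arc_iff v _).mpr
        (Or.inr ⟨by show v.1.val = v.1.val; rfl, by show v.2.val + 1 = v.2.val + 1; rfl⟩))]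
      rw [show toNN v = (v.1.val + 1, v.2.val + 1) from rfl,
        show toNN (v.1, (⟨v.2.val + 1, by omega⟩ : Fin n)) = (v.1.val + 1, (v.2.val + 1) + 1) from rfl]
      rw [psi_vert_high (d := v.1.val + v.2.val)
        (by omega : v.1.val + (v.2.val + 1) = (v.1.val + v.2.val) + 1)
        (by omega) (by omega) (by omega)]
      rw [show n - (v.2.val + 1) = r + 1 from by omega,
        show 2 * n - (v.1.val + v.2.val) - 2 = r + 1 from by omega]
      exact div_self (Nat.cast_ne_zero.mpr (by omega))
    · by_cases hjn : v.2.val = n - 1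
      · -- only successor w1 = (v.1+1, v.2); high diagonal automatically
        have hj : v.1.val + 1 ≤ n - 1 := by omega
        have hzero : ∀ c ∈ (Finset.univ : Finset (Fin n × Fin n)),
            c ≠ ((⟨v.1.val + 1, by omega⟩ : Fin n), v.2) →
            Mg n v c * (Mg n ^ r) c ((⟨n - 1, by omega⟩ : Fin n), (⟨n - 1, by omega⟩ : Fin n)) = 0 := by
          rintro c - hc
          have hnc : ¬ gArc (toNN v) (toNN c) := by
            intro harc
            rcases (arc_iff v c).mp harc with ⟨e1, e2⟩ | ⟨e1, e2⟩
            · exact hc (pext (by show c.1.val = v.1.val + 1; omega)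
                (by show c.2.val = v.2.val; omega))
            · have := c.2.isLt; omega
          rw [Mg_nonarc v c hnc, zero_mul]
        rw [Finset.sum_eq_single_of_mem ((⟨v.1.val + 1, by omega⟩ : Fin n), v.2)
          (Finset.mem_univ _) hzero]
        rw [ih (⟨v.1.val + 1, by omega⟩, v.2) (by omega)
          (by show (v.1.val + 1) + v.2.val = 2 * n - 2 - r; omega)]
        rw [mul_one]
        rw [Mg_arc v ((⟨v.1.val + 1, by omega⟩ : Fin n), v.2) ((arc_iff v _).mpr
          (Or.inl ⟨by show v.1.val + 1 = v.1.val + 1; rfl, by show v.2.val = v.2.val; rfl⟩))]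
        rw [show toNN v = (v.1.val + 1, v.2.val + 1) from rfl,
          show toNN ((⟨v.1.val + 1, by omega⟩ : Fin n), v.2) = ((v.1.val + 1) + 1, v.2.val + 1) from rfl]
        rw [psi_horiz_high (d := v.1.val + v.2.val)
          (by omega : (v.1.val + 1) + v.2.val = (v.1.val + v.2.val) + 1)
          (by omega) (by omega) (by omega)]
        rw [show n - (v.1.val + 1) = r + 1 from by omega,
          show 2 * n - (v.1.val + v.2.val) - 2 = r + 1 from by omega]
        exact div_self (Nat.cast_ne_zero.mpr (by omega))
      · -- two successors
        have hi' : v.1.val + 1 ≤ n - 1 := by omega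
        have hj' : v.2.val + 1 ≤ n - 1 := by omega
        have hne : ((⟨v.1.val + 1, by omega⟩ : Fin n), v.2)
            ≠ (v.1, (⟨v.2.val + 1, by omega⟩ : Fin n)) := by
          intro h
          have h' := congrArg (fun z : Fin n × Fin n => z.1.val) h
          have h'' : v.1.val + 1 = v.1.val := h'
          omega
        have hzero : ∀ c ∈ (Finset.univ : Finset (Fin n × Fin n)),
            c ≠ ((⟨v.1.val + 1, by omega⟩ : Fin n), v.2) ∧
            c ≠ (v.1, (⟨v.2.val + 1, by omega⟩ : Fin n)) →
            Mg n v c * (Mg n ^ r) c ((⟨n - 1, by omega⟩ : Fin n), (⟨n - 1, by omega⟩ : Fin n)) = 0 := by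
          rintro c - ⟨hc1, hc2⟩
          have hnc : ¬ gArc (toNN v) (toNN c) := by
            intro harc
            rcases (arc_iff v c).mp harc with ⟨e1, e2⟩ | ⟨e1, e2⟩
            · exact hc1 (pext (by show c.1.val = v.1.val + 1; omega)
                (by show c.2.val = v.2.val; omega))
            · exact hc2 (pext (by show c.1.val = v.1.val; omega)
                (by show c.2.val = v.2.val + 1; omega))
          rw [Mg_nonarc v c hnc, zero_mul]
        rw [Finset.sum_eq_add_of_mem ((⟨v.1.val + 1, by omega⟩ : Fin n), v.2)
          (v.1, (⟨v.2.val + 1, by omega⟩ : Fin n))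
          (Finset.mem_univ _) (Finset.mem_univ _) hne hzero]
        rw [ih (⟨v.1.val + 1, by omega⟩, v.2) (by omega)
          (by show (v.1.val + 1) + v.2.val = 2 * n - 2 - r; omega)]
        rw [ih (v.1, ⟨v.2.val + 1, by omega⟩) (by omega)
          (by show v.1.val + (v.2.val + 1) = 2 * n - 2 - r; omega)]
        rw [mul_one, mul_one]
        rw [Mg_arc v ((⟨v.1.val + 1, by omega⟩ : Fin n), v.2) ((arc_iff v _).mpr
          (Or.inl ⟨by show v.1.val + 1 = v.1.val + 1; rfl, by show v.2.val = v.2.val; rfl⟩))]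
        rw [Mg_arc v (v.1, (⟨v.2.val + 1, by omega⟩ : Fin n)) ((arc_iff v _).mpr
          (Or.inr ⟨by show v.1.val = v.1.val; rfl, by show v.2.val + 1 = v.2.val + 1; rfl⟩))]
        rw [show toNN v = (v.1.val + 1, v.2.val + 1) from rfl,
          show toNN ((⟨v.1.val + 1, by omega⟩ : Fin n), v.2) = ((v.1.val + 1) + 1, v.2.val + 1) from rfl,
          show toNN (v.1, (⟨v.2.val + 1, by omega⟩ : Fin n)) = (v.1.val + 1, (v.2.val + 1) + 1) from rfl]
        by_cases hdn : v.1.val + v.2.val + 2 ≤ n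
        · rw [psi_horiz_low (d := v.1.val + v.2.val)
            (by omega : (v.1.val + 1) + v.2.val = (v.1.val + v.2.val) + 1) (by omega)]
          rw [psi_vert_low (d := v.1.val + v.2.val)
            (by omega : v.1.val + (v.2.val + 1) = (v.1.val + v.2.val) + 1) (by omega)]
          rw [← add_div]
          rw [show ((v.1.val + 1 : ℕ) : ℚ) + ((v.2.val + 1 : ℕ) : ℚ)
              = ((v.1.val + v.2.val + 2 : ℕ) : ℚ) from by
            exact_mod_cast (by omega : (v.1.val + 1) + (v.2.val + 1) = v.1.val + v.2.val + 2)]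
          exact div_self (Nat.cast_ne_zero.mpr (by omega))
        · rw [psi_horiz_high (d := v.1.val + v.2.val)
            (by omega : (v.1.val + 1) + v.2.val = (v.1.val + v.2.val) + 1)
            (by omega) (by omega) (by omega)]
          rw [psi_vert_high (d := v.1.val + v.2.val)
            (by omega : v.1.val + (v.2.val + 1) = (v.1.val + v.2.val) + 1)
            (by omega) (by omega) (by omega)]
          rw [← add_div]
          rw [show ((n - (v.1.val + 1) : ℕ) : ℚ) + ((n - (v.2.val + 1) : ℕ) : ℚ)
              = ((2 * n - (v.1.val + v.2.val) - 2 : ℕ) : ℚ) from by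
            exact_mod_cast (by omega :
              (n - (v.1.val + 1)) + (n - (v.2.val + 1)) = 2 * n - (v.1.val + v.2.val) - 2)]
          exact div_self (Nat.cast_ne_zero.mpr (by omega))

private lemma mono_diag {n : ℕ} (P : Fin (2 * n - 1) → Fin n × Fin n) (hP : IsMonoPath n P) :
    ∀ (mv : ℕ) (h : mv < 2 * n - 1), (P ⟨mv, h⟩).1.val + (P ⟨mv, h⟩).2.val = mv := by
  obtain ⟨h0, -, harc⟩ := hP
  intro mv
  induction mv with
  | zero =>
    intro h
    have h1 := h0 h
    have e1 : (P ⟨0, h⟩).1.val + 1 = 1 := congrArg Prod.fst h1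
    have e2 : (P ⟨0, h⟩).2.val + 1 = 1 := congrArg Prod.snd h1
    omega
  | succ mv ih =>
    intro h
    have h' : mv < 2 * n - 1 := by omega
    have hih := ih h'
    have ha : gArc (toNN (P ⟨mv, h'⟩)) (toNN (P ⟨mv + 1, h⟩)) := harc mv h
    rcases (arc_iff _ _).mp ha with ⟨e1, e2⟩ | ⟨e1, e2⟩ <;> omega

end Stmt16Aux

/-- For every vertex `v` in diagonal `k`, the total `ψ`-weight of all monotone
paths from `(1,1)` to `(n,n)` through `v` is `1/k` if `k ≤ n` and `1/(2n-k)`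
otherwise. -/
theorem stmt16 (n : ℕ) (hn : 1 ≤ n) (v : Fin n × Fin n) (k : ℕ)
    (hk : (toNN v).1 + (toNN v).2 - 1 = k) :
    (∑ P ∈ Finset.univ.filter (fun P : Fin (2 * n - 1) → Fin n × Fin n =>
        IsMonoPath n P ∧ ∃ m, P m = v), pathWeight n P) =
      if k ≤ n then 1 / (k : ℚ) else 1 / ((2 * n - k : ℕ) : ℚ) := by
  classical
  have hi1 := v.1.isLt
  have hj1 := v.2.isLt
  have hk1 : k = v.1.val + v.2.val + 1 := by
    have h1 : (toNN v).1 = v.1.val + 1 := rfl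
    have h2 : (toNN v).2 = v.2.val + 1 := rfl
    omega
  have hconv : (∑ P ∈ Finset.univ.filter (fun P : Fin (2 * n - 1) → Fin n × Fin n =>
      IsMonoPath n P ∧ ∃ m, P m = v), pathWeight n P)
      = ∑ P ∈ Finset.univ.filter (fun P : Fin (2 * n - 1) → Fin n × Fin n =>
          P ⟨0, by omega⟩ = ((⟨0, hn⟩, ⟨0, hn⟩) : Fin n × Fin n) ∧ P ⟨k - 1, by omega⟩ = v ∧
          P ⟨2 * n - 2, by omega⟩ = ((⟨n - 1, by omega⟩, ⟨n - 1, by omega⟩) : Fin n × Fin n)),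
        ∏ m : Fin (2 * n - 1 - 1), Stmt16Aux.Mg n (P ⟨m.val, by have := m.isLt; omega⟩)
          (P ⟨m.val + 1, by have := m.isLt; omega⟩) := by
    rw [Finset.sum_filter, Finset.sum_filter]
    refine Finset.sum_congr rfl fun P _ => ?_
    by_cases h1 : IsMonoPath n P ∧ ∃ m, P m = v
    · rw [if_pos h1]
      have hdg := Stmt16Aux.mono_diag P h1.1
      have hstart : P ⟨0, by omega⟩ = ((⟨0, hn⟩, ⟨0, hn⟩) : Fin n × Fin n) := by
        have hx := h1.1.1 (by omega)
        have e1 : (P ⟨0, by omega⟩ : Fin n × Fin n).1.val + 1 = 1 := congrArg Prod.fst hx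
        have e2 : (P ⟨0, by omega⟩ : Fin n × Fin n).2.val + 1 = 1 := congrArg Prod.snd hx
        exact Stmt16Aux.pext (by show _ = (0 : ℕ); omega) (by show _ = (0 : ℕ); omega)
      have hend : P ⟨2 * n - 2, by omega⟩
          = ((⟨n - 1, by omega⟩, ⟨n - 1, by omega⟩) : Fin n × Fin n) := by
        have hx := h1.1.2.1 (by omega)
        have e1 : (P ⟨2 * n - 2, by omega⟩ : Fin n × Fin n).1.val + 1 = n := congrArg Prod.fst hx
        have e2 : (P ⟨2 * n - 2, by omega⟩ : Fin n × Fin n).2.val + 1 = n := congrArg Prod.snd hx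
        exact Stmt16Aux.pext (by show _ = n - 1; omega) (by show _ = n - 1; omega)
      have hpos : P ⟨k - 1, by omega⟩ = v := by
        obtain ⟨m, hm⟩ := h1.2
        have hdm : (P m).1.val + (P m).2.val = m.val := hdg m.val m.isLt
        rw [hm] at hdm
        have hmv : m = (⟨k - 1, by omega⟩ : Fin (2 * n - 1)) := Fin.ext (by show m.val = k - 1; omega)
        rw [← hmv]
        exact hm
      rw [if_pos ⟨hstart, hpos, hend⟩]
      show (∏ m : Fin (2 * n - 2),
          psi n (toNN (P ⟨m.val, by have := m.isLt; omega⟩))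
            (toNN (P ⟨m.val + 1, by have := m.isLt; omega⟩)))
        = ∏ m : Fin (2 * n - 2), Stmt16Aux.Mg n (P ⟨m.val, by have := m.isLt; omega⟩)
            (P ⟨m.val + 1, by have := m.isLt; omega⟩)
      refine Finset.prod_congr rfl fun m _ => ?_
      exact (Stmt16Aux.Mg_arc _ _ (h1.1.2.2 m.val (by have := m.isLt; omega))).symm
    · rw [if_neg h1]
      by_cases h2 : P ⟨0, by omega⟩ = ((⟨0, hn⟩, ⟨0, hn⟩) : Fin n × Fin n) ∧
          P ⟨k - 1, by omega⟩ = v ∧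
          P ⟨2 * n - 2, by omega⟩ = ((⟨n - 1, by omega⟩, ⟨n - 1, by omega⟩) : Fin n × Fin n)
      · rw [if_pos h2]
        symm
        have hnm : ¬ IsMonoPath n P := fun hm => h1 ⟨hm, ⟨⟨k - 1, by omega⟩, h2.2.1⟩⟩
        have hbad : ∃ (mv : ℕ) (hm : mv + 1 < 2 * n - 1),
            ¬ gArc (toNN (P ⟨mv, by omega⟩)) (toNN (P ⟨mv + 1, hm⟩)) := by
          by_contra hno
          push_neg at hno
          refine hnm ⟨?_, ?_, ?_⟩
          · intro h0
            have hx : P ⟨0, h0⟩ = ((⟨0, hn⟩, ⟨0, hn⟩) : Fin n × Fin n) := h2.1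
            rw [hx]
            rfl
          · intro hl
            have hx : P ⟨2 * n - 2, hl⟩
                = ((⟨n - 1, by omega⟩, ⟨n - 1, by omega⟩) : Fin n × Fin n) := h2.2.2
            rw [hx]
            show (n - 1 + 1, n - 1 + 1) = ((n : ℕ), (n : ℕ))
            rw [show n - 1 + 1 = n from by omega]
          · intro mv hm
            exact hno mv hm
        obtain ⟨mv, hm, hbad'⟩ := hbad
        refine Finset.prod_eq_zero (Finset.mem_univ (⟨mv, by omega⟩ : Fin (2 * n - 1 - 1))) ?_
        exact Stmt16Aux.Mg_nonarc _ _ hbad'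
      · rw [if_neg h2]
  rw [hconv]
  refine Eq.trans (Eq.trans ?_ (Stmt16Aux.path_sum_through' (Stmt16Aux.Mg n) (2 * n - 1)
    (2 * n - 2) (k - 1) (by omega) (by omega) (⟨0, hn⟩, ⟨0, hn⟩) v
    (⟨n - 1, by omega⟩, ⟨n - 1, by omega⟩))) ?_
  · exact Stmt16Aux.sum_filter_swap (fun P => Iff.rfl) _
  · rw [Stmt16Aux.fwd hn (k - 1) v (by omega) (by omega)]
    rw [Stmt16Aux.bwd hn (2 * n - 2 - (k - 1)) v (by omega) (by omega), mul_one]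
    rw [show k - 1 + 1 = k from by omega]
end
end

section
/- Let G be a graph with a fixed connected component G₀ containing a distinguished vertex a₀, let B be a bramble of G all of whose members lie in G₀, and define S to be the family of subsets X of V(G) such that X does not cover B and X does not separate G₀ (i.e., there do not exist u, u' in V(G₀) \ X such that every path in G₀ between u and u' meets X). Then S is closed under intersection: if S₁, S₂ ∈ S then S₁ ∩ S₂ ∈ S. -/
open scoped Classical
noncomputable section

/-- `X` separates the connected component `G₀` of `a₀`: there are two vertices
of `G₀` outside `X` such that every walk between them meets `X`. -/
def SepComp {V : Type} (G : SimpleGraph V) (a₀ : V) (X : Set V) : Prop :=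
  ∃ u u' : V, G.Reachable a₀ u ∧ G.Reachable a₀ u' ∧ u ∉ X ∧ u' ∉ X ∧
    ∀ p : G.Walk u u', ∃ z ∈ p.support, z ∈ X

/-- Lift a walk in an induced subgraph to a walk in `G` whose support stays
in the inducing set. -/
lemma lift_induce_walk {V : Type} (G : SimpleGraph V) (b : Set V) {x y : b}
    (p : (G.induce b).Walk x y) :
    ∃ q : G.Walk x.val y.val, ∀ z ∈ q.support, z ∈ b := by
  induction p with
  | nil => exact ⟨SimpleGraph.Walk.nil, by simp⟩
  | cons h p ih =>
    obtain ⟨q, hq⟩ := ih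
    refine ⟨SimpleGraph.Walk.cons h q, ?_⟩
    intro z hz
    have hz := List.mem_cons.1 hz
    rcases hz with rfl | hz
    · exact Subtype.coe_prop _
    · exact hq z hz

/-- Avoiding-reachability is transitive. -/
lemma avoid_trans {V : Type} {G : SimpleGraph V} {X : Set V} {u v w : V}
    (h₁ : ∃ p : G.Walk u v, ∀ z ∈ p.support, z ∉ X)
    (h₂ : ∃ p : G.Walk v w, ∀ z ∈ p.support, z ∉ X) :
    ∃ p : G.Walk u w, ∀ z ∈ p.support, z ∉ X := by
  obtain ⟨p, hp⟩ := h₁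
  obtain ⟨q, hq⟩ := h₂
  refine ⟨p.append q, ?_⟩
  intro z hz
  rcases (SimpleGraph.Walk.mem_support_append_iff _ _).1 hz with hz | hz
  · exact hp z hz
  · exact hq z hz

lemma avoid_symm {V : Type} {G : SimpleGraph V} {X : Set V} {u v : V}
    (h : ∃ p : G.Walk u v, ∀ z ∈ p.support, z ∉ X) :
    ∃ p : G.Walk v u, ∀ z ∈ p.support, z ∉ X := by
  obtain ⟨p, hp⟩ := h
  exact ⟨p.reverse, fun z hz => hp z (by simpa using hz)⟩

/-- The family of sets that neither cover the bramble `B` (whose members all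
lie in the component `G₀` of `a₀`) nor separate `G₀` is closed under
intersection. -/
theorem stmt18 {V : Type} (G : SimpleGraph V) (a₀ : V)
    (B : Set (Set V)) (hB : IsBramble G B)
    (hcomp : ∀ b ∈ B, ∀ v ∈ b, G.Reachable a₀ v)
    (X₁ X₂ : Set V)
    (h₁c : ¬ Covers X₁ B) (h₁s : ¬ SepComp G a₀ X₁)
    (h₂c : ¬ Covers X₂ B) (h₂s : ¬ SepComp G a₀ X₂) :
    ¬ Covers (X₁ ∩ X₂) B ∧ ¬ SepComp G a₀ (X₁ ∩ X₂) := by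
  simp only [Covers, SepComp] at h₁c h₂c h₁s h₂s
  push_neg at h₁c h₂c h₁s h₂s
  obtain ⟨b₁, hb₁B, hb₁⟩ := h₁c
  obtain ⟨b₂, hb₂B, hb₂⟩ := h₂c
  have hb₁X : ∀ z ∈ b₁, z ∉ X₁ := fun z hz hX =>
    Set.eq_empty_iff_forall_notMem.1 hb₁ z ⟨hX, hz⟩
  have hb₂X : ∀ z ∈ b₂, z ∉ X₂ := fun z hz hX =>
    Set.eq_empty_iff_forall_notMem.1 hb₂ z ⟨hX, hz⟩
  -- pick points in b₁ and b₂
  obtain ⟨⟨v₁, hv₁⟩⟩ := (hB.1 b₁ hb₁B).nonempty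
  obtain ⟨⟨v₂, hv₂⟩⟩ := (hB.1 b₂ hb₂B).nonempty
  have hv₁r : G.Reachable a₀ v₁ := hcomp b₁ hb₁B v₁ hv₁
  have hv₂r : G.Reachable a₀ v₂ := hcomp b₂ hb₂B v₂ hv₂
  -- walks inside b₁ avoid X₁ ∩ X₂
  have walk_in_b₁ : ∀ x y : V, x ∈ b₁ → y ∈ b₁ →
      ∃ p : G.Walk x y, ∀ z ∈ p.support, z ∉ X₁ ∩ X₂ := by
    intro x y hx hy
    obtain ⟨q, hq⟩ := lift_induce_walk G b₁
      ((hB.1 b₁ hb₁B).preconnected ⟨x, hx⟩ ⟨y, hy⟩).some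
    exact ⟨q, fun z hz hX => hb₁X z (hq z hz) hX.1⟩
  have walk_in_b₂ : ∀ x y : V, x ∈ b₂ → y ∈ b₂ →
      ∃ p : G.Walk x y, ∀ z ∈ p.support, z ∉ X₁ ∩ X₂ := by
    intro x y hx hy
    obtain ⟨q, hq⟩ := lift_induce_walk G b₂
      ((hB.1 b₂ hb₂B).preconnected ⟨x, hx⟩ ⟨y, hy⟩).some
    exact ⟨q, fun z hz hX => hb₂X z (hq z hz) hX.2⟩
  -- v₂ to v₁ avoiding X₁ ∩ X₂, using touching
  have hv₂v₁ : ∃ p : G.Walk v₂ v₁, ∀ z ∈ p.support, z ∉ X₁ ∩ X₂ := by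
    rcases hB.2 b₁ hb₁B b₂ hb₂B with ⟨w, hw₁, hw₂⟩ | ⟨s, hs, t, ht, hst⟩
    · exact avoid_trans (walk_in_b₂ v₂ w hv₂ hw₂) (walk_in_b₁ w v₁ hw₁ hv₁)
    · refine avoid_trans (walk_in_b₂ v₂ t hv₂ ht) ?_
      refine avoid_trans (X := X₁ ∩ X₂)
        ⟨SimpleGraph.Walk.cons hst.symm SimpleGraph.Walk.nil, ?_⟩
        (walk_in_b₁ s v₁ hs hv₁)
      intro z hz
      simp only [SimpleGraph.Walk.support_cons, SimpleGraph.Walk.support_nil,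
        List.mem_cons, List.mem_singleton] at hz
      rcases hz with rfl | rfl | h
      · exact fun hX => hb₂X z ht hX.2
      · exact fun hX => hb₁X z hs hX.1
      · exact absurd h (List.not_mem_nil)
  -- key: from any u in the component outside X₁ ∩ X₂, reach v₁ avoiding X₁ ∩ X₂
  have key : ∀ u : V, G.Reachable a₀ u → u ∉ X₁ ∩ X₂ →
      ∃ p : G.Walk u v₁, ∀ z ∈ p.support, z ∉ X₁ ∩ X₂ := by
    intro u hur hu
    by_cases hu1 : u ∈ X₁
    · -- then u ∉ X₂; go to v₂ avoiding X₂, then v₂ → v₁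
      have hu2 : u ∉ X₂ := fun h => hu ⟨hu1, h⟩
      obtain ⟨p, hp⟩ := h₂s u v₂ hur hv₂r hu2 (hb₂X v₂ hv₂)
      exact avoid_trans ⟨p, fun z hz hX => hp z hz hX.2⟩ hv₂v₁
    · obtain ⟨p, hp⟩ := h₁s u v₁ hur hv₁r hu1 (hb₁X v₁ hv₁)
      exact ⟨p, fun z hz hX => hp z hz hX.1⟩
  constructor
  · intro hcov
    obtain ⟨z, hz⟩ := hcov b₁ hb₁B
    exact hb₁X z hz.2 hz.1.1
  · rintro ⟨u, u', hur, hur', hu, hu', hsep⟩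
    obtain ⟨p, hp⟩ := avoid_trans (key u hur hu) (avoid_symm (key u' hur' hu'))
    obtain ⟨z, hz, hzX⟩ := hsep p
    exact hp z hz hzX
end
end
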